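/- arXiv:2510.03373 — 2 statements merged into one kernel-verified Lean document; each statement's English description precedes it below -/
import Mathlib

section
/- Let P be a Perron system and let 𝔓 be the associated family of unions of consecutive P-cylinders. Then every half-open interval U = (x₁, x₂] with 0 ≤ x₁ < x₂ ≤ 1 can be covered by at most three sets from 𝔓, each of diameter at most x₂ − x₁. -/
open Set Filter MeasureTheory
open scoped ENNReal

noncomputable section

/-- A Perron system `P = (φ_n)`: `φ₀ = φ []` and `φ_n(c₁,…,c_n) = φ [c₁,…,c_n]`;
all values are positive integers. -/
structure PerronSystem where
  φ : List ℕ → ℕ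
  φ_pos : ∀ l, 0 < φ l

/-- `(c₁−1)c₁⋯(c_n−1)c_n` (0-based indexing: `c 0 = c₁`). -/
def qprod (c : ℕ → ℕ) (n : ℕ) : ℝ :=
  ∏ i ∈ Finset.range n, (((c i : ℝ) - 1) * (c i : ℝ))

namespace PerronSystem

variable (P : PerronSystem)

/-- `r P c 0 = φ₀` and `r P c n = φ_n(c₁,…,c_n)`. -/
def r (c : ℕ → ℕ) (n : ℕ) : ℕ := P.φ (List.ofFn fun j : Fin n => c j)

/-- The word `c₁ … c_k` is P-admissible: `c_i ≥ φ_{i−1}(c₁,…,c_{i−1}) + 1`. -/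
def AdmissibleUpTo (c : ℕ → ℕ) (k : ℕ) : Prop := ∀ i < k, P.r c i + 1 ≤ c i

/-- The infinite digit sequence `c` is P-admissible. -/
def Admissible (c : ℕ → ℕ) : Prop := ∀ i, P.r c i + 1 ≤ c i

/-- `r₀ r₁ ⋯ r_{n−1}`. -/
def rprod (c : ℕ → ℕ) (n : ℕ) : ℝ := ∏ i ∈ Finset.range n, (P.r c i : ℝ)

/-- Diameter `D_k = r₀⋯r_{k−1} / ((c₁−1)c₁⋯(c_k−1)c_k)` of the cylinder with base `c₁…c_k`. -/
def D (c : ℕ → ℕ) (k : ℕ) : ℝ := P.rprod c k / qprod c k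

/-- `S_k`, the infimum of the positive Perron cylinder with base `c₁…c_k`. -/
def S (c : ℕ → ℕ) (k : ℕ) : ℝ :=
  ∑ n ∈ Finset.range k, P.rprod c (n + 1) / (qprod c n * (c n : ℝ))

/-- The positive Perron cylinder `Δ^P_{c₁…c_k} = (S_k, S_k + D_k]`. -/
def cyl (c : ℕ → ℕ) (k : ℕ) : Set ℝ := Ioc (P.S c k) (P.S c k + P.D c k)

/-- `A_k = ∑_{n=0}^{k−1} (−1)^n r₀⋯r_n / ((c₁−1)c₁⋯(c_n−1)c_n (c_{n+1}−1))`. -/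
def A (c : ℕ → ℕ) (k : ℕ) : ℝ :=
  ∑ n ∈ Finset.range k, (-1 : ℝ) ^ n * P.rprod c (n + 1) / (qprod c n * ((c n : ℝ) - 1))

/-- The second endpoint `A_k + (−1)^k D_k` of the interval `I_{c₁…c_k}`. -/
def altEnd (c : ℕ → ℕ) (k : ℕ) : ℝ := P.A c k + (-1 : ℝ) ^ k * P.D c k

/-- The countable set `IS^{P⁻}` of endpoints of the intervals `I_{c₁…c_k}`
(the word of length `0` contributes the endpoints `0` and `1`). -/
def IS : Set ℝ :=
  {x | ∃ (c : ℕ → ℕ) (k : ℕ), P.AdmissibleUpTo c k ∧ (x = P.A c k ∨ x = P.altEnd c k)}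

/-- The alternating Perron cylinder `Δ^{P⁻}_{c₁…c_k} = I_{c₁…c_k} \ IS^{P⁻}`. -/
def altCyl (c : ℕ → ℕ) (k : ℕ) : Set ℝ :=
  Ioo (min (P.A c k) (P.altEnd c k)) (max (P.A c k) (P.altEnd c k)) \ P.IS

/-- The family `𝔓` of all unions of consecutive positive Perron cylinders of the same
rank contained in a single cylinder of the previous rank. -/
def famP : Set (Set ℝ) :=
  {U | ∃ (c : ℕ → ℕ) (k n : ℕ), P.AdmissibleUpTo c k ∧ P.r c k + 1 ≤ n ∧
      ((∃ m, n ≤ m ∧ U = ⋃ i ∈ Finset.Icc n m, P.cyl (Function.update c k i) (k + 1)) ∨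
        U = ⋃ i ∈ {j : ℕ | n ≤ j}, P.cyl (Function.update c k i) (k + 1))}

/-- The subfamily `𝔓₁ ⊆ 𝔓` of finite unions. -/
def famP1 : Set (Set ℝ) :=
  {U | ∃ (c : ℕ → ℕ) (k n m : ℕ), P.AdmissibleUpTo c k ∧ P.r c k + 1 ≤ n ∧ n ≤ m ∧
      U = ⋃ i ∈ Finset.Icc n m, P.cyl (Function.update c k i) (k + 1)}

/-- The family `𝔓⁻` of all unions of consecutive alternating Perron cylinders of the same
rank contained in a single cylinder of the previous rank. -/
def famAlt : Set (Set ℝ) :=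
  {U | ∃ (c : ℕ → ℕ) (k n : ℕ), P.AdmissibleUpTo c k ∧ P.r c k + 1 ≤ n ∧
      ((∃ m, n ≤ m ∧ U = ⋃ i ∈ Finset.Icc n m, P.altCyl (Function.update c k i) (k + 1)) ∨
        U = ⋃ i ∈ {j : ℕ | n ≤ j}, P.altCyl (Function.update c k i) (k + 1))}

/-- The subfamily `𝔓₁⁻ ⊆ 𝔓⁻` of finite unions. -/
def famAlt1 : Set (Set ℝ) :=
  {U | ∃ (c : ℕ → ℕ) (k n m : ℕ), P.AdmissibleUpTo c k ∧ P.r c k + 1 ≤ n ∧ n ≤ m ∧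
      U = ⋃ i ∈ Finset.Icc n m, P.altCyl (Function.update c k i) (k + 1)}

/-- The value `Δ^P_c` of the positive Perron expansion with digit sequence `c`. -/
def posValue (c : ℕ → ℕ) : ℝ :=
  ∑' n : ℕ, P.rprod c (n + 1) / (qprod c n * (c n : ℝ))

/-- The value `Δ^{P⁻}_c` of the alternating Perron expansion with digit sequence `c`. -/
def altValue (c : ℕ → ℕ) : ℝ :=
  ∑' n : ℕ, (-1 : ℝ) ^ n * P.rprod c (n + 1) / (qprod c n * ((c n : ℝ) - 1))

end PerronSystem

/-- The Hausdorff `α`-dimensional measure of `E` with respect to a family of coverings `Φ`. -/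
def Hfam (Φ : Set (Set ℝ)) (α : ℝ) (E : Set ℝ) : ℝ≥0∞ :=
  ⨆ (ε : ℝ) (_ : 0 < ε),
    ⨅ (f : ℕ → Set ℝ) (_ : E ⊆ ⋃ n, f n) (_ : ∀ n, f n ∈ Φ)
      (_ : ∀ n, EMetric.diam (f n) ≤ ENNReal.ofReal ε),
      ∑' n : ℕ, EMetric.diam (f n) ^ α

/-- The Hausdorff dimension of `E` with respect to a family of coverings `Φ`:
`inf {α > 0 : H^α(E, Φ) = 0}` (equal to `∞` if no such `α` exists). -/
def dimFam (Φ : Set (Set ℝ)) (E : Set ℝ) : ℝ≥0∞ :=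
  ⨅ (α : ℝ) (_ : 0 < α) (_ : Hfam Φ α E = 0), ENNReal.ofReal α

end
section PerronCoverAux

namespace PerronCover

open Set Function


/-! ### Real division helpers -/

lemma divA_le {A p q : ℝ} (hA : 0 ≤ A) (hp : 0 < p) (h : p ≤ q) : A / q ≤ A / p := by
  have hq : 0 < q := lt_of_lt_of_le hp h
  rw [div_le_div_iff₀ hq hp]
  nlinarith

lemma divA_lt {A p q : ℝ} (hA : 0 < A) (hp : 0 < p) (h : p < q) : A / q < A / p := by
  have hq : 0 < q := lt_trans hp h
  rw [div_lt_div_iff₀ hq hp]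
  nlinarith

lemma div_shift (A p : ℝ) (hp : 0 < p) : A / p - A / (p+1) = A / (p*(p+1)) := by
  have h1 : p ≠ 0 := ne_of_gt hp
  have h2 : p + 1 ≠ 0 := by positivity
  field_simp
  ring

lemma exists_digit {s A x : ℝ} (hA : 0 < A) {n : ℕ} (hn : 1 ≤ n)
    (h1 : s < x) (h2 : x ≤ s + A / n) :
    ∃ i : ℕ, n ≤ i ∧ s + A / ((i:ℝ) + 1) < x ∧ x ≤ s + A / i := by
  classical
  have hxs : 0 < x - s := by linarith
  have hex : ∃ j : ℕ, s + A / ((j:ℝ) + 1) < x := by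
    obtain ⟨N, hN⟩ := exists_nat_gt (A / (x - s))
    have hN0 : (0:ℝ) < (N:ℝ) + 1 := by positivity
    refine ⟨N, ?_⟩
    have h3 : A / ((N:ℝ)+1) < x - s := by
      rw [div_lt_iff₀ hN0]
      rw [div_lt_iff₀ hxs] at hN
      nlinarith
    linarith
  have hspec := Nat.find_spec hex
  by_cases hj : Nat.find hex ≤ n
  · refine ⟨n, le_refl _, ?_, h2⟩
    have hle : A / ((n:ℝ)+1) ≤ A / ((Nat.find hex :ℝ)+1) := by
      apply divA_le hA.le (by positivity)
      have : ((Nat.find hex :ℕ):ℝ) ≤ (n:ℝ) := by exact_mod_cast hj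
      linarith
    linarith
  · push_neg at hj
    refine ⟨Nat.find hex, by omega, hspec, ?_⟩
    have hj₀1 : 1 ≤ Nat.find hex := by omega
    have hmin := Nat.find_min hex (show Nat.find hex - 1 < Nat.find hex by omega)
    have hcast : ((Nat.find hex - 1 : ℕ) : ℝ) + 1 = ((Nat.find hex : ℕ) : ℝ) := by
      rw [Nat.cast_sub hj₀1, Nat.cast_one]
      ring
    rw [not_lt, hcast] at hmin
    exact hmin

lemma biUnion_Icc_Ioc {s A : ℝ} (hA : 0 < A) {n : ℕ} (hn : 1 ≤ n) :
    ∀ {m : ℕ}, n < m →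
      (⋃ i ∈ Finset.Icc (n+1) m, Ioc (s + A / (i:ℝ)) (s + A / ((i:ℝ) - 1)))
        = Ioc (s + A / (m:ℝ)) (s + A / (n:ℝ)) := by
  intro m hm
  induction m, hm using Nat.le_induction with
  | base =>
    rw [Finset.Icc_self]
    simp only [Finset.mem_singleton, Set.iUnion_iUnion_eq_left]
    have : ((n+1 : ℕ) : ℝ) - 1 = (n : ℝ) := by push_cast; ring
    rw [this]
  | succ m hm ih =>
    have h1 : n + 1 ≤ m + 1 := by omega
    rw [← Finset.insert_Icc_right_eq_Icc_add_one h1, Finset.set_biUnion_insert, ih]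
    have hc : ((m+1 : ℕ) : ℝ) - 1 = (m : ℝ) := by push_cast; ring
    rw [hc]
    have hn0 : (0:ℝ) < (n:ℝ) := by exact_mod_cast hn
    have hm0 : (0:ℝ) < (m:ℝ) := by exact_mod_cast (by omega : 0 < m)
    have hm10 : (0:ℝ) < ((m+1:ℕ):ℝ) := by positivity
    apply Set.Ioc_union_Ioc_eq_Ioc
    · have : A / ((m+1:ℕ):ℝ) ≤ A / (m:ℝ) := by
        apply divA_le hA.le hm0; push_cast; linarith
      linarith
    · have : A / (m:ℝ) ≤ A / (n:ℝ) := by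
        apply divA_le hA.le hn0
        exact_mod_cast (by omega : n ≤ m)
      linarith

lemma biUnion_tail_Ioc {s A : ℝ} (hA : 0 < A) {n : ℕ} (hn : 1 ≤ n) :
    (⋃ i ∈ {j : ℕ | n+1 ≤ j}, Ioc (s + A / (i:ℝ)) (s + A / ((i:ℝ) - 1)))
      = Ioc s (s + A / (n:ℝ)) := by
  have hn0 : (0:ℝ) < (n:ℝ) := by exact_mod_cast hn
  ext x
  simp only [Set.mem_iUnion, Set.mem_Ioc, Set.mem_setOf_eq]
  constructor
  · rintro ⟨i, hi, h1, h2⟩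
    have hi0 : (0:ℝ) < (i:ℝ) := by exact_mod_cast (by omega : 0 < i)
    have hAi : 0 < A / (i:ℝ) := by positivity
    refine ⟨by linarith, ?_⟩
    have : A / ((i:ℝ)-1) ≤ A / (n:ℝ) := by
      apply divA_le hA.le hn0
      have : ((n+1:ℕ):ℝ) ≤ (i:ℝ) := by exact_mod_cast hi
      push_cast at this
      linarith
    linarith
  · rintro ⟨h1, h2⟩
    obtain ⟨i, hi, hlt, hle⟩ := exists_digit hA hn h1 h2
    refine ⟨i+1, by omega, ?_, ?_⟩
    · push_cast
      convert hlt using 3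
    · push_cast
      convert hle using 3
      · rfl
      · ring


/-! ### Perron system algebra -/

variable (P : PerronSystem)

lemma r_pos (c : ℕ → ℕ) (n : ℕ) : 1 ≤ P.r c n := P.φ_pos _

lemma r_congr {c c' : ℕ → ℕ} {n : ℕ} (h : ∀ j < n, c j = c' j) : P.r c n = P.r c' n := by
  unfold PerronSystem.r
  have he : (List.ofFn fun j : Fin n => c j) = List.ofFn fun j : Fin n => c' j := by
    apply congrArg
    funext j
    exact h j j.2
  rw [he]

lemma rprod_congr {c c' : ℕ → ℕ} {n : ℕ} (h : ∀ j < n, c j = c' j) :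
    P.rprod c n = P.rprod c' n := by
  unfold PerronSystem.rprod
  apply Finset.prod_congr rfl
  intro i hi
  have hi' := Finset.mem_range.mp hi
  have : P.r c i = P.r c' i := r_congr P (fun j hj => h j (lt_trans hj hi'))
  rw [this]

lemma qprod_congr {c c' : ℕ → ℕ} {n : ℕ} (h : ∀ j < n, c j = c' j) :
    qprod c n = qprod c' n := by
  unfold qprod
  apply Finset.prod_congr rfl
  intro i hi
  rw [h i (Finset.mem_range.mp hi)]

lemma S_congr {c c' : ℕ → ℕ} {k : ℕ} (h : ∀ j < k, c j = c' j) :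
    P.S c k = P.S c' k := by
  unfold PerronSystem.S
  apply Finset.sum_congr rfl
  intro n hn
  have hn' := Finset.mem_range.mp hn
  rw [rprod_congr P (fun j hj => h j (lt_of_lt_of_le hj hn')),
      qprod_congr (fun j hj => h j (lt_trans hj hn')), h n hn']

lemma adm_two {c : ℕ → ℕ} {k : ℕ} (h : P.AdmissibleUpTo c k) : ∀ i < k, 2 ≤ c i := by
  intro i hi
  have h1 := h i hi
  have h2 := r_pos P c i
  omega

lemma rprod_pos (c : ℕ → ℕ) (n : ℕ) : 0 < P.rprod c n := by
  apply Finset.prod_pos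
  intro i _
  exact_mod_cast P.φ_pos _

lemma qprod_pos {c : ℕ → ℕ} {k : ℕ} (h : ∀ i < k, 2 ≤ c i) : 0 < qprod c k := by
  apply Finset.prod_pos
  intro i hi
  have h2 : (2:ℝ) ≤ (c i : ℝ) := by exact_mod_cast h i (Finset.mem_range.mp hi)
  nlinarith

/-- `Aq = r₀⋯r_k / ((c₁-1)c₁⋯(c_k-1)c_k)`, the scale factor for children of a rank-`k`
cylinder. -/
noncomputable def Aq (P : PerronSystem) (c : ℕ → ℕ) (k : ℕ) : ℝ :=
  P.rprod c (k+1) / qprod c k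

lemma Aq_pos {c : ℕ → ℕ} {k : ℕ} (h : ∀ i < k, 2 ≤ c i) : 0 < Aq P c k :=
  div_pos (rprod_pos P c (k+1)) (qprod_pos h)

lemma D_pos {c : ℕ → ℕ} {k : ℕ} (h : ∀ i < k, 2 ≤ c i) : 0 < P.D c k :=
  div_pos (rprod_pos P c k) (qprod_pos h)

lemma D_eq (c : ℕ → ℕ) (k : ℕ) : P.D c k = Aq P c k / (P.r c k : ℝ) := by
  have hr : ((P.r c k : ℕ):ℝ) ≠ 0 := by
    have := r_pos P c k; positivity
  unfold PerronSystem.D Aq PerronSystem.rprod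
  rw [Finset.prod_range_succ]
  rw [div_div]
  rw [mul_comm (qprod c k) _]
  rw [← div_div]
  rw [mul_div_assoc]
  rw [div_self hr, mul_one]

lemma rprod_update (c : ℕ → ℕ) (k i : ℕ) :
    P.rprod (Function.update c k i) (k+1) = P.rprod c (k+1) := by
  unfold PerronSystem.rprod
  apply Finset.prod_congr rfl
  intro j hj
  have hj' : j ≤ k := by
    have := Finset.mem_range.mp hj; omega
  have : P.r (Function.update c k i) j = P.r c j := by
    apply r_congr
    intro j' hj'2
    apply Function.update_of_ne
    omega
  rw [this]

lemma update_eq_below {c : ℕ → ℕ} {k j i : ℕ} (h : j < k) :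
    Function.update c k i j = c j := Function.update_of_ne (by omega) _ _

lemma S_update (c : ℕ → ℕ) (k i : ℕ) :
    P.S (Function.update c k i) (k+1) = P.S c k + Aq P c k / (i : ℝ) := by
  unfold PerronSystem.S
  rw [Finset.sum_range_succ]
  congr 1
  · apply Finset.sum_congr rfl
    intro n hn
    have hn' := Finset.mem_range.mp hn
    have h1 : P.rprod (Function.update c k i) (n+1) = P.rprod c (n+1) :=
      rprod_congr P (fun j hj => update_eq_below (by omega))
    have h2 : qprod (Function.update c k i) n = qprod c n :=
      qprod_congr (fun j hj => update_eq_below (by omega))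
    rw [h1, h2, update_eq_below hn']
  · rw [rprod_update]
    have h2 : qprod (Function.update c k i) k = qprod c k :=
      qprod_congr (fun j hj => update_eq_below hj)
    rw [h2, Function.update_self, Aq, div_div]

lemma D_update (c : ℕ → ℕ) (k i : ℕ) :
    P.D (Function.update c k i) (k+1) = Aq P c k / (((i:ℝ) - 1) * (i:ℝ)) := by
  unfold PerronSystem.D
  rw [rprod_update]
  unfold qprod
  rw [Finset.prod_range_succ]
  have h2 : ∏ j ∈ Finset.range k,
      (((Function.update c k i j : ℕ):ℝ) - 1) * ((Function.update c k i j : ℕ):ℝ)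
        = qprod c k := qprod_congr (fun j hj => update_eq_below hj)
  rw [h2, Function.update_self, Aq, div_div]

lemma cyl_update {c : ℕ → ℕ} {k : ℕ} (i : ℕ) (hi : 2 ≤ i) :
    P.cyl (Function.update c k i) (k+1)
      = Set.Ioc (P.S c k + Aq P c k / (i:ℝ)) (P.S c k + Aq P c k / ((i:ℝ) - 1)) := by
  unfold PerronSystem.cyl
  rw [S_update, D_update]
  have hi1 : (1:ℝ) ≤ (i:ℝ) - 1 := by
    have : (2:ℝ) ≤ (i:ℝ) := by exact_mod_cast hi
    linarith
  have h1 : (i:ℝ) ≠ 0 := by positivity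
  have h2 : (i:ℝ) - 1 ≠ 0 := by linarith
  have : Aq P c k / (i:ℝ) + Aq P c k / (((i:ℝ) - 1) * (i:ℝ)) = Aq P c k / ((i:ℝ)-1) := by
    field_simp
    ring
  rw [add_assoc, this]

lemma mem_cyl {c : ℕ → ℕ} {k : ℕ} {x : ℝ} :
    x ∈ P.cyl c k ↔ P.S c k < x ∧ x ≤ P.S c k + P.D c k := by
  unfold PerronSystem.cyl
  exact Set.mem_Ioc

lemma adm_update {c : ℕ → ℕ} {k : ℕ} (h : P.AdmissibleUpTo c k) {i : ℕ}
    (hi : P.r c k + 1 ≤ i) : P.AdmissibleUpTo (Function.update c k i) (k+1) := by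
  intro j hj
  rcases lt_or_eq_of_le (by omega : j ≤ k) with hjk | hjk
  · have h1 : P.r (Function.update c k i) j = P.r c j :=
      r_congr P (fun j' hj' => update_eq_below (by omega))
    rw [h1, update_eq_below hjk]
    exact h j hjk
  · have h1 : P.r (Function.update c k i) j = P.r c j :=
      r_congr P (fun j' hj' => update_eq_below (by omega))
    rw [h1, hjk, Function.update_self]
    exact hi

/-! ### famP membership -/

lemma famP_Icc {c : ℕ → ℕ} {k : ℕ} (h : P.AdmissibleUpTo c k)
    {n m : ℕ} (hn : P.r c k ≤ n) (hnm : n < m) :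
    Set.Ioc (P.S c k + Aq P c k / (m:ℝ)) (P.S c k + Aq P c k / (n:ℝ)) ∈ P.famP := by
  have h2 := adm_two P h
  have hA := Aq_pos P h2
  have hr := r_pos P c k
  refine ⟨c, k, n+1, h, by omega, Or.inl ⟨m, by omega, ?_⟩⟩
  have hu : ∀ (i : ℕ) (_ : i ∈ Finset.Icc (n+1) m), P.cyl (Function.update c k i) (k+1)
      = Set.Ioc (P.S c k + Aq P c k/(i:ℝ)) (P.S c k + Aq P c k/((i:ℝ)-1)) := by
    intro i hi
    have := Finset.mem_Icc.mp hi
    exact cyl_update P i (by omega)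
  rw [Set.iUnion₂_congr hu, biUnion_Icc_Ioc hA (by omega) hnm]

lemma famP_tail {c : ℕ → ℕ} {k : ℕ} (h : P.AdmissibleUpTo c k)
    {n : ℕ} (hn : P.r c k ≤ n) :
    Set.Ioc (P.S c k) (P.S c k + Aq P c k / (n:ℝ)) ∈ P.famP := by
  have h2 := adm_two P h
  have hA := Aq_pos P h2
  have hr := r_pos P c k
  refine ⟨c, k, n+1, h, by omega, Or.inr ?_⟩
  have hu : ∀ (i : ℕ) (_ : i ∈ {j : ℕ | n+1 ≤ j}), P.cyl (Function.update c k i) (k+1)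
      = Set.Ioc (P.S c k + Aq P c k/(i:ℝ)) (P.S c k + Aq P c k/((i:ℝ)-1)) := by
    intro i hi
    have : n + 1 ≤ i := hi
    exact cyl_update P i (by omega)
  rw [Set.iUnion₂_congr hu, biUnion_tail_Ioc hA (by omega)]

/-! ### digit choice and chains -/

open Classical in
/-- The index of the child cylinder containing `x`. -/
noncomputable def digitOf (P : PerronSystem) (x : ℝ) (c : ℕ → ℕ) (K : ℕ) : ℕ :=
  if h : ∃ i, P.r c K + 1 ≤ i ∧ x ∈ P.cyl (Function.update c K i) (K+1) then h.choose else 0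

lemma digitOf_spec {x : ℝ} {c : ℕ → ℕ} {K : ℕ}
    (hex : ∃ i, P.r c K + 1 ≤ i ∧ x ∈ P.cyl (Function.update c K i) (K+1)) :
    P.r c K + 1 ≤ digitOf P x c K ∧
      x ∈ P.cyl (Function.update c K (digitOf P x c K)) (K+1) := by
  unfold digitOf
  rw [dif_pos hex]
  exact hex.choose_spec

lemma step_exists {x : ℝ} {c : ℕ → ℕ} {K : ℕ} (h : P.AdmissibleUpTo c K)
    (hx : x ∈ P.cyl c K) :
    ∃ i, P.r c K + 1 ≤ i ∧ x ∈ P.cyl (Function.update c K i) (K+1) := by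
  have h2 := adm_two P h
  have hA := Aq_pos P h2
  have hr := r_pos P c K
  rw [mem_cyl] at hx
  obtain ⟨hx1, hx2⟩ := hx
  rw [D_eq] at hx2
  obtain ⟨i, hi, hlt, hle⟩ := exists_digit hA hr hx1 hx2
  refine ⟨i+1, by omega, ?_⟩
  rw [cyl_update P (i+1) (by omega), Set.mem_Ioc]
  constructor
  · have : ((i+1:ℕ):ℝ) = (i:ℝ) + 1 := by push_cast; ring
    rw [this]; exact hlt
  · have : ((i+1:ℕ):ℝ) - 1 = (i:ℝ) := by push_cast; ring
    rw [this]; exact hle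

/-- The chain of cylinders containing `x`, starting from the base word `c₀` of length `k₀`. -/
noncomputable def chainF (P : PerronSystem) (x : ℝ) (c₀ : ℕ → ℕ) (k₀ : ℕ) : ℕ → ℕ → ℕ
  | 0 => c₀
  | m+1 => Function.update (chainF P x c₀ k₀ m) (k₀+m)
      (digitOf P x (chainF P x c₀ k₀ m) (k₀+m))

variable {x : ℝ} {c₀ : ℕ → ℕ} {k₀ : ℕ}

lemma chain_inv (hadm₀ : P.AdmissibleUpTo c₀ k₀) (hx₀ : x ∈ P.cyl c₀ k₀) (m : ℕ) :
    P.AdmissibleUpTo (chainF P x c₀ k₀ m) (k₀ + m) ∧ x ∈ P.cyl (chainF P x c₀ k₀ m) (k₀ + m) := by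
  induction m with
  | zero => exact ⟨hadm₀, hx₀⟩
  | succ m ih =>
    obtain ⟨ha, hm⟩ := ih
    have hex := step_exists P ha hm
    have hdig := digitOf_spec P hex
    exact ⟨adm_update P ha hdig.1, hdig.2⟩

lemma chain_digit_eq (m : ℕ) :
    chainF P x c₀ k₀ (m+1) (k₀+m) = digitOf P x (chainF P x c₀ k₀ m) (k₀+m) := by
  show Function.update _ _ _ _ = _
  rw [Function.update_self]

lemma chain_succ_eq (m : ℕ) :
    chainF P x c₀ k₀ (m+1)
      = Function.update (chainF P x c₀ k₀ m) (k₀+m) (chainF P x c₀ k₀ (m+1) (k₀+m)) := by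
  rw [chain_digit_eq]
  rfl

lemma chain_digit_le (hadm₀ : P.AdmissibleUpTo c₀ k₀) (hx₀ : x ∈ P.cyl c₀ k₀) (m : ℕ) :
    P.r (chainF P x c₀ k₀ m) (k₀+m) + 1 ≤ chainF P x c₀ k₀ (m+1) (k₀+m) := by
  obtain ⟨ha, hm⟩ := chain_inv P hadm₀ hx₀ m
  have hex := step_exists P ha hm
  have hdig := digitOf_spec P hex
  rw [chain_digit_eq]
  exact hdig.1

lemma chain_S_succ (m : ℕ) :
    P.S (chainF P x c₀ k₀ (m+1)) (k₀+m+1)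
      = P.S (chainF P x c₀ k₀ m) (k₀+m)
        + Aq P (chainF P x c₀ k₀ m) (k₀+m) / (chainF P x c₀ k₀ (m+1) (k₀+m) : ℝ) := by
  conv_lhs => rw [chain_succ_eq]
  exact S_update P _ _ _

lemma chain_D_succ (m : ℕ) :
    P.D (chainF P x c₀ k₀ (m+1)) (k₀+m+1)
      = Aq P (chainF P x c₀ k₀ m) (k₀+m)
        / (((chainF P x c₀ k₀ (m+1) (k₀+m) : ℝ) - 1) * (chainF P x c₀ k₀ (m+1) (k₀+m) : ℝ)) := by
  conv_lhs => rw [chain_succ_eq]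
  exact D_update P _ _ _


lemma sq_pos1 {r : ℝ} (hr : 1 ≤ r) : 0 < (r+1)*(r+2) := by nlinarith

lemma sq_pos2 {r : ℝ} (hr : 1 ≤ r) : 0 < r*(r+1) := by nlinarith

lemma sq_ineq1 {r v : ℝ} (hr : 1 ≤ r) (hv : r + 2 ≤ v) : (r+1)*(r+2) ≤ (v-1)*v := by nlinarith

lemma sq_lt1 {r : ℝ} (hr : 1 ≤ r) : r*(r+1) < (r+1)*(r+2) := by nlinarith

lemma sq_pos3 {w jj : ℝ} (hw : 0 < w) (hj : w + 1 ≤ jj) : 0 < (jj-1)*jj := by nlinarith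

lemma sq_ineq2 {jj : ℝ} (hj : 1 ≤ jj) : (jj-1)*jj ≤ jj*(jj+1) := by nlinarith

lemma sq_ineq3 {i : ℝ} (hi : 2 ≤ i) : i ≤ (i-1)*i := by nlinarith

lemma div_split {A i : ℝ} (hi : 2 ≤ i) : A/i + A/((i-1)*i) = A/(i-1) := by
  have h1 : i ≠ 0 := by linarith
  have h2 : i - 1 ≠ 0 := by intro h; rw [sub_eq_zero] at h; linarith
  field_simp
  ring

lemma chain_digit_two (hadm₀ : P.AdmissibleUpTo c₀ k₀) (hx₀ : x ∈ P.cyl c₀ k₀) (m : ℕ) :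
    2 ≤ chainF P x c₀ k₀ (m+1) (k₀+m) := by
  have h := chain_digit_le P hadm₀ hx₀ m
  have hr := r_pos P (chainF P x c₀ k₀ m) (k₀+m)
  omega

lemma chain_top_succ (hadm₀ : P.AdmissibleUpTo c₀ k₀) (hx₀ : x ∈ P.cyl c₀ k₀) (m : ℕ) :
    P.S (chainF P x c₀ k₀ (m+1)) (k₀+m+1) + P.D (chainF P x c₀ k₀ (m+1)) (k₀+m+1)
      = P.S (chainF P x c₀ k₀ m) (k₀+m)
        + Aq P (chainF P x c₀ k₀ m) (k₀+m) / ((chainF P x c₀ k₀ (m+1) (k₀+m) : ℝ) - 1) := by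
  rw [chain_S_succ, chain_D_succ]
  have h2 : (2:ℝ) ≤ (chainF P x c₀ k₀ (m+1) (k₀+m) : ℝ) := by
    exact_mod_cast chain_digit_two P hadm₀ hx₀ m
  rw [add_assoc, div_split h2]

lemma chain_Aq_pos (hadm₀ : P.AdmissibleUpTo c₀ k₀) (hx₀ : x ∈ P.cyl c₀ k₀) (m : ℕ) :
    0 < Aq P (chainF P x c₀ k₀ m) (k₀+m) :=
  Aq_pos P (adm_two P (chain_inv P hadm₀ hx₀ m).1)

lemma chain_D_pos (hadm₀ : P.AdmissibleUpTo c₀ k₀) (hx₀ : x ∈ P.cyl c₀ k₀) (m : ℕ) :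
    0 < P.D (chainF P x c₀ k₀ m) (k₀+m) :=
  D_pos P (adm_two P (chain_inv P hadm₀ hx₀ m).1)

lemma chain_digit_cast (hadm₀ : P.AdmissibleUpTo c₀ k₀) (hx₀ : x ∈ P.cyl c₀ k₀) (m : ℕ) :
    (P.r (chainF P x c₀ k₀ m) (k₀+m) : ℝ) + 1 ≤ (chainF P x c₀ k₀ (m+1) (k₀+m) : ℝ) := by
  exact_mod_cast chain_digit_le P hadm₀ hx₀ m

lemma chain_top_le (hadm₀ : P.AdmissibleUpTo c₀ k₀) (hx₀ : x ∈ P.cyl c₀ k₀) (m : ℕ) :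
    P.S (chainF P x c₀ k₀ (m+1)) (k₀+m+1) + P.D (chainF P x c₀ k₀ (m+1)) (k₀+m+1)
      ≤ P.S (chainF P x c₀ k₀ m) (k₀+m) + P.D (chainF P x c₀ k₀ m) (k₀+m) := by
  rw [chain_top_succ P hadm₀ hx₀ m, D_eq]
  have hA := chain_Aq_pos P hadm₀ hx₀ m
  have hr : (0:ℝ) < (P.r (chainF P x c₀ k₀ m) (k₀+m) : ℝ) := by
    exact_mod_cast r_pos P _ _
  have hd := chain_digit_cast P hadm₀ hx₀ m
  have := divA_le hA.le hr (by linarith :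
    (P.r (chainF P x c₀ k₀ m) (k₀+m) : ℝ) ≤ (chainF P x c₀ k₀ (m+1) (k₀+m) : ℝ) - 1)
  linarith

lemma chain_D_le_half (hadm₀ : P.AdmissibleUpTo c₀ k₀) (hx₀ : x ∈ P.cyl c₀ k₀) (m : ℕ) :
    P.D (chainF P x c₀ k₀ (m+1)) (k₀+m+1) ≤ P.D (chainF P x c₀ k₀ m) (k₀+m) / 2 := by
  rw [chain_D_succ, D_eq]
  have hA := chain_Aq_pos P hadm₀ hx₀ m
  have hr : (0:ℝ) < (P.r (chainF P x c₀ k₀ m) (k₀+m) : ℝ) := by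
    exact_mod_cast r_pos P _ _
  have hr1 : (1:ℝ) ≤ (P.r (chainF P x c₀ k₀ m) (k₀+m) : ℝ) := by
    exact_mod_cast r_pos P _ _
  have hd := chain_digit_cast P hadm₀ hx₀ m
  rw [div_div]
  apply divA_le hA.le (by linarith)
  set rr := (P.r (chainF P x c₀ k₀ m) (k₀+m) : ℝ)
  set ii := (chainF P x c₀ k₀ (m+1) (k₀+m) : ℝ)
  nlinarith

lemma chain_D_le (hadm₀ : P.AdmissibleUpTo c₀ k₀) (hx₀ : x ∈ P.cyl c₀ k₀) (m : ℕ) :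
    P.D (chainF P x c₀ k₀ (m+1)) (k₀+m+1) ≤ P.D (chainF P x c₀ k₀ m) (k₀+m) := by
  have h1 := chain_D_le_half P hadm₀ hx₀ m
  have h2 := chain_D_pos P hadm₀ hx₀ m
  linarith

lemma chain_top_antitone (hadm₀ : P.AdmissibleUpTo c₀ k₀) (hx₀ : x ∈ P.cyl c₀ k₀)
    {m m' : ℕ} (h : m ≤ m') :
    P.S (chainF P x c₀ k₀ m') (k₀+m') + P.D (chainF P x c₀ k₀ m') (k₀+m')
      ≤ P.S (chainF P x c₀ k₀ m) (k₀+m) + P.D (chainF P x c₀ k₀ m) (k₀+m) := by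
  induction m', h using Nat.le_induction with
  | base => exact le_refl _
  | succ m' hm ih =>
    calc P.S (chainF P x c₀ k₀ (m'+1)) (k₀+m'+1) + P.D (chainF P x c₀ k₀ (m'+1)) (k₀+m'+1)
        ≤ _ := chain_top_le P hadm₀ hx₀ m'
      _ ≤ _ := ih

lemma chain_D_antitone (hadm₀ : P.AdmissibleUpTo c₀ k₀) (hx₀ : x ∈ P.cyl c₀ k₀)
    {m m' : ℕ} (h : m ≤ m') :
    P.D (chainF P x c₀ k₀ m') (k₀+m') ≤ P.D (chainF P x c₀ k₀ m) (k₀+m) := by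
  induction m', h using Nat.le_induction with
  | base => exact le_refl _
  | succ m' hm ih =>
    calc P.D (chainF P x c₀ k₀ (m'+1)) (k₀+m'+1)
        ≤ _ := chain_D_le P hadm₀ hx₀ m'
      _ ≤ _ := ih

lemma chain_D_small (hadm₀ : P.AdmissibleUpTo c₀ k₀) (hx₀ : x ∈ P.cyl c₀ k₀)
    {ε : ℝ} (hε : 0 < ε) : ∃ m, P.D (chainF P x c₀ k₀ m) (k₀+m) < ε := by
  have hpow : ∀ m, P.D (chainF P x c₀ k₀ m) (k₀+m) * 2^m ≤ P.D c₀ k₀ := by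
    intro m
    induction m with
    | zero => simp [chainF]
    | succ m ih =>
      have h1 := chain_D_le_half P hadm₀ hx₀ m
      have h2 : (0:ℝ) < 2^m := by positivity
      calc P.D (chainF P x c₀ k₀ (m+1)) (k₀+m+1) * 2^(m+1)
          ≤ (P.D (chainF P x c₀ k₀ m) (k₀+m) / 2) * 2^(m+1) :=
            mul_le_mul_of_nonneg_right h1 (by positivity)
        _ = P.D (chainF P x c₀ k₀ m) (k₀+m) * 2^m := by ring
        _ ≤ P.D c₀ k₀ := ih
  obtain ⟨N, hN⟩ := pow_unbounded_of_one_lt (P.D c₀ k₀ / ε) (by norm_num : (1:ℝ) < 2)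
  refine ⟨N, ?_⟩
  have h2 : (0:ℝ) < 2^N := by positivity
  have h3 := hpow N
  rw [div_lt_iff₀ hε] at hN
  nlinarith

end PerronCover

end PerronCoverAux
set_option maxHeartbeats 1600000 in
/-- Every half-open interval `U = (x₁, x₂] ⊆ (0,1]` can be covered by at most
three sets from `𝔓`, each of diameter at most `x₂ − x₁`. -/
theorem cover_Ioc_by_three_famP (P : PerronSystem) (x₁ x₂ : ℝ)
    (h₀ : 0 ≤ x₁) (h₁₂ : x₁ < x₂) (h₁ : x₂ ≤ 1) :
    ∃ U₁ U₂ U₃ : Set ℝ, U₁ ∈ P.famP ∧ U₂ ∈ P.famP ∧ U₃ ∈ P.famP ∧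
      Set.Ioc x₁ x₂ ⊆ U₁ ∪ U₂ ∪ U₃ ∧
      EMetric.diam U₁ ≤ ENNReal.ofReal (x₂ - x₁) ∧
      EMetric.diam U₂ ≤ ENNReal.ofReal (x₂ - x₁) ∧
      EMetric.diam U₃ ≤ ENNReal.ofReal (x₂ - x₁) := by
  classical
  open PerronCover in
  have hδ : 0 < x₂ - x₁ := by linarith
  have hadm0 : P.AdmissibleUpTo (fun _ => 0) 0 := fun i hi => absurd hi (Nat.not_lt_zero i)
  have hS00 : ∀ c : ℕ → ℕ, P.S c 0 = 0 := fun c => by simp [PerronSystem.S]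
  have hx20 : x₂ ∈ P.cyl (fun _ => 0) 0 := by
    rw [PerronCover.mem_cyl, hS00]
    have hD : P.D (fun _ => 0) 0 = 1 := by
      simp [PerronSystem.D, PerronSystem.rprod, qprod]
    rw [hD]
    constructor <;> linarith
  set Z : ℕ → ℕ → ℕ := PerronCover.chainF P x₂ (fun _ => 0) 0 with hZ
  -- basic chain facts
  have hadm : ∀ m, P.AdmissibleUpTo (Z m) m := by
    intro m
    have h := (PerronCover.chain_inv P hadm0 hx20 m).1
    rw [← hZ] at h
    simpa using h
  have hmem : ∀ m, P.S (Z m) m < x₂ ∧ x₂ ≤ P.S (Z m) m + P.D (Z m) m := by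
    intro m
    have h := (PerronCover.chain_inv P hadm0 hx20 m).2
    rw [← hZ] at h
    rw [PerronCover.mem_cyl] at h
    simpa using h
  -- choose the splitting level k
  have hexk : ∃ p, x₁ < P.S (Z p) p := by
    obtain ⟨m, hm⟩ := PerronCover.chain_D_small P hadm0 hx20 hδ
    rw [← hZ] at hm
    simp only [Nat.zero_add] at hm
    exact ⟨m, by linarith [(hmem m).2]⟩
  have htspec := Nat.find_spec hexk
  have ht0 : Nat.find hexk ≠ 0 := by
    intro h
    rw [h, hS00] at htspec
    linarith
  obtain ⟨k, hkν⟩ := Nat.exists_eq_succ_of_ne_zero ht0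
  rw [hkν] at htspec
  have hSk_le : P.S (Z k) k ≤ x₁ := by
    have := Nat.find_min hexk (by omega : k < Nat.find hexk)
    linarith [not_lt.mp this]
  -- level-k and level-(k+1) data
  have hchS := PerronCover.chain_S_succ (P := P) (x := x₂) (c₀ := fun _ => 0) (k₀ := 0)
  have hchT := PerronCover.chain_top_succ (P := P) (x := x₂) (c₀ := fun _ => 0) (k₀ := 0)
    hadm0 hx20
  have hchD := PerronCover.chain_digit_le (P := P) (x := x₂) (c₀ := fun _ => 0) (k₀ := 0)
    hadm0 hx20
  have hchA := PerronCover.chain_Aq_pos (P := P) (x := x₂) (c₀ := fun _ => 0) (k₀ := 0)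
    hadm0 hx20
  rw [← hZ] at hchS hchT hchD hchA
  simp only [Nat.zero_add] at hchS hchT hchD hchA
  have hs1 : P.S (Z (k+1)) (k+1) = P.S (Z k) k + Aq P (Z k) k / (Z (k+1) k : ℝ) := hchS k
  have hs2 : P.S (Z (k+2)) (k+2)
      = P.S (Z (k+1)) (k+1) + Aq P (Z (k+1)) (k+1) / (Z (k+2) (k+1) : ℝ) := hchS (k+1)
  have htop2 : P.S (Z (k+2)) (k+2) + P.D (Z (k+2)) (k+2)
      = P.S (Z (k+1)) (k+1) + Aq P (Z (k+1)) (k+1) / ((Z (k+2) (k+1) : ℝ) - 1) := hchT (k+1)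
  have hA0 : 0 < Aq P (Z k) k := hchA k
  have hA1 : 0 < Aq P (Z (k+1)) (k+1) := hchA (k+1)
  have hw_le : P.r (Z k) k + 1 ≤ Z (k+1) k := hchD k
  have hi2_le : P.r (Z (k+1)) (k+1) + 1 ≤ Z (k+2) (k+1) := hchD (k+1)
  have hr0 : 1 ≤ P.r (Z k) k := PerronCover.r_pos P _ _
  have hr1 : 1 ≤ P.r (Z (k+1)) (k+1) := PerronCover.r_pos P _ _
  have hi2two : 2 ≤ Z (k+2) (k+1) := by omega
  have hi2R : (2:ℝ) ≤ (Z (k+2) (k+1) : ℝ) := by exact_mod_cast hi2two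
  have hwtwo : 2 ≤ Z (k+1) k := by omega
  have hwR : (0:ℝ) < (Z (k+1) k : ℝ) := by
    have : (2:ℝ) ≤ (Z (k+1) k : ℝ) := by exact_mod_cast hwtwo
    linarith
  -- abbreviations (real numbers)
  set s0 := P.S (Z k) k with hds0
  set s1 := P.S (Z (k+1)) (k+1) with hds1
  set A0 := Aq P (Z k) k with hdA0
  set A1 := Aq P (Z (k+1)) (k+1) with hdA1
  set wR : ℝ := (Z (k+1) k : ℝ) with hdw
  set iR : ℝ := (Z (k+2) (k+1) : ℝ) with hdi
  have hx1s1 : x₁ < s1 := htspec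
  have hs1x2 : s1 < x₂ := (hmem (k+1)).1
  have hs2x2 : P.S (Z (k+2)) (k+2) < x₂ := (hmem (k+2)).1
  have hx2top2 : x₂ ≤ s1 + A1 / (iR - 1) := by
    have := (hmem (k+2)).2
    rw [htop2] at this
    exact this
  have hAi2e : A1 / iR < x₂ - s1 := by
    rw [hs2] at hs2x2
    linarith
  have hA1iR : 0 < A1 / iR := by positivity
  have hd2 : A1 / (iR - 1) - A1 / iR = A1 / ((iR - 1) * iR) := by
    have := PerronCover.div_shift A1 (iR - 1) (by linarith)
    have hh : iR - 1 + 1 = iR := by ring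
    rw [hh] at this
    exact this
  have hd2le : A1 / ((iR - 1) * iR) ≤ A1 / iR := by
    apply PerronCover.divA_le hA1.le (by linarith)
    exact PerronCover.sq_ineq3 hi2R
  -- right-hand famP sets
  have hcast1 : ((Z (k+2) (k+1) - 1 : ℕ) : ℝ) = iR - 1 := by
    rw [Nat.cast_sub (by omega), Nat.cast_one, hdi]
  have hR1mem : Set.Ioc s1 (s1 + A1 / iR) ∈ P.famP := by
    have h := PerronCover.famP_tail P (hadm (k+1)) (n := Z (k+2) (k+1)) (by omega)
    rw [← hds1, ← hdA1, ← hdi] at h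
    exact h
  have hR2mem : Set.Ioc (s1 + A1 / iR) (s1 + A1 / (iR - 1)) ∈ P.famP := by
    have h := PerronCover.famP_Icc P (hadm (k+1)) (n := Z (k+2) (k+1) - 1)
      (m := Z (k+2) (k+1)) (by omega) (by omega)
    rw [hcast1, ← hds1, ← hdA1, ← hdi] at h
    exact h
  have hR3mem : Set.Ioc s1 (s1 + A1 / (iR - 1)) ∈ P.famP := by
    have h := PerronCover.famP_tail P (hadm (k+1)) (n := Z (k+2) (k+1) - 1) (by omega)
    rw [hcast1, ← hds1, ← hdA1] at h
    exact h
  -- diameters of the right-hand sets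
  have hdR1 : (s1 + A1 / iR) - s1 < x₂ - x₁ := by linarith
  have hdR2 : (s1 + A1 / (iR - 1)) - (s1 + A1 / iR) < x₂ - x₁ := by
    have : A1 / (iR - 1) - A1 / iR ≤ A1 / iR := by rw [hd2]; exact hd2le
    linarith
  -- main case split
  rcases eq_or_lt_of_le hSk_le with hA | hx1in
  · -- Case A : x₁ is the left endpoint of the level-k cylinder
    refine ⟨Set.Ioc s0 (s0 + A0 / wR), Set.Ioc s1 (s1 + A1 / iR),
      Set.Ioc (s1 + A1 / iR) (s1 + A1 / (iR - 1)), ?_, hR1mem, hR2mem, ?_, ?_, ?_, ?_⟩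
    · have h := PerronCover.famP_tail P (hadm k) (n := Z (k+1) k) (by omega)
      rw [← hds0, ← hdA0, ← hdw] at h
      exact h
    · intro y hy
      simp only [Set.mem_union, Set.mem_Ioc] at hy ⊢
      obtain ⟨hy1, hy2⟩ := hy
      by_cases hc : y ≤ s1
      · exact Or.inl (Or.inl ⟨by rw [hA]; exact hy1, by rw [← hs1]; exact hc⟩)
      · push_neg at hc
        by_cases hc2 : y ≤ s1 + A1 / iR
        · exact Or.inl (Or.inr ⟨hc, hc2⟩)
        · push_neg at hc2
          exact Or.inr ⟨hc2, by linarith⟩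
    · rw [EMetric.diam, Real.ediam_Ioc]
      apply ENNReal.ofReal_le_ofReal
      have h5 : s0 + A0 / wR = s1 := hs1.symm
      linarith
    · rw [EMetric.diam, Real.ediam_Ioc]
      exact ENNReal.ofReal_le_ofReal (by linarith)
    · rw [EMetric.diam, Real.ediam_Ioc]
      exact ENNReal.ofReal_le_ofReal (by linarith)
  · -- x₁ lies strictly inside the level-k cylinder : find its child j+1
    have hx1top : x₁ ≤ s0 + A0 / (P.r (Z k) k : ℝ) := by
      have hD0 : P.D (Z k) k = A0 / (P.r (Z k) k : ℝ) := PerronCover.D_eq P _ _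
      have hwr : A0 / wR ≤ A0 / (P.r (Z k) k : ℝ) := by
        apply PerronCover.divA_le hA0.le (by exact_mod_cast hr0)
        rw [hdw]
        exact_mod_cast (by omega : P.r (Z k) k ≤ Z (k+1) k)
      rw [hs1] at hx1s1
      linarith
    obtain ⟨j, hj_ge, hjlt, hjle⟩ :=
      PerronCover.exists_digit hA0 hr0 hx1in hx1top
    have hjR1 : (0:ℝ) < (j:ℝ) := by exact_mod_cast (by omega : 0 < j)
    have hwj : Z (k+1) k ≤ j := by
      by_contra hco
      push_neg at hco
      have hcast : ((j:ℝ) + 1) ≤ wR := by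
        rw [hdw]; exact_mod_cast hco
      have := PerronCover.divA_le hA0.le (by positivity : (0:ℝ) < (j:ℝ)+1) hcast
      rw [hs1] at hx1s1
      linarith
    have hcastj : ((j+1:ℕ):ℝ) = (j:ℝ)+1 := by push_cast; ring
    rcases eq_or_lt_of_le hwj with hjw | hjw
    · -- Case C : x₁ lies in the child adjacent to the one containing x₂
      have hwj' : wR = (j:ℝ) := by rw [hdw, hjw]
      have hbadm : P.AdmissibleUpTo (Function.update (Z k) k (j+1)) (k+1) :=
        PerronCover.adm_update P (hadm k) (by omega)
      have hbx : x₁ ∈ P.cyl (Function.update (Z k) k (j+1)) (k+1) := by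
        rw [PerronCover.cyl_update P (j+1) (by omega), Set.mem_Ioc, hcastj]
        have e1 : (j:ℝ) + 1 - 1 = (j:ℝ) := by ring
        rw [e1]
        exact ⟨hjlt, hjle⟩
      set H : ℕ → ℕ → ℕ := PerronCover.chainF P x₁ (Function.update (Z k) k (j+1)) (k+1)
        with hH
      have hHadm : ∀ m, P.AdmissibleUpTo (H m) (k+1+m) := by
        intro m
        have h := (PerronCover.chain_inv P hbadm hbx m).1
        rw [← hH] at h
        exact h
      have hHmem : ∀ m, P.S (H m) (k+1+m) < x₁ ∧
          x₁ ≤ P.S (H m) (k+1+m) + P.D (H m) (k+1+m) := by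
        intro m
        have h := (PerronCover.chain_inv P hbadm hbx m).2
        rw [← hH] at h
        rw [PerronCover.mem_cyl] at h
        exact h
      have hHS := PerronCover.chain_S_succ (P := P) (x := x₁)
        (c₀ := Function.update (Z k) k (j+1)) (k₀ := k+1)
      have hHT := PerronCover.chain_top_succ (P := P) (x := x₁)
        (c₀ := Function.update (Z k) k (j+1)) (k₀ := k+1) hbadm hbx
      have hHD := PerronCover.chain_digit_le (P := P) (x := x₁)
        (c₀ := Function.update (Z k) k (j+1)) (k₀ := k+1) hbadm hbx
      have hHA := PerronCover.chain_Aq_pos (P := P) (x := x₁)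
        (c₀ := Function.update (Z k) k (j+1)) (k₀ := k+1) hbadm hbx
      rw [← hH] at hHS hHT hHD hHA
      -- top of the base cylinder is s1
      have htopH0 : P.S (H 0) (k+1) + P.D (H 0) (k+1) = s1 := by
        have hup : H 0 = Function.update (Z k) k (j+1) := rfl
        rw [hup, PerronCover.S_update, PerronCover.D_update, ← hds0, ← hdA0, hcastj]
        have e1 : (j:ℝ) + 1 - 1 = (j:ℝ) := by ring
        rw [e1]
        have hsh := PerronCover.div_shift A0 (j:ℝ) hjR1
        rw [hs1, hwj']
        linarith
      have hβ : 0 < s1 - x₁ := by linarith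
      have hexν : ∃ m, P.S (H m) (k+1+m) + P.D (H m) (k+1+m) < s1 := by
        obtain ⟨m, hm⟩ := PerronCover.chain_D_small P hbadm hbx hβ
        rw [← hH] at hm
        exact ⟨m, by linarith [(hHmem m).1]⟩
      have hνspec := Nat.find_spec hexν
      have hν0 : Nat.find hexν ≠ 0 := by
        intro h
        rw [h] at hνspec
        simp only [Nat.add_zero] at hνspec
        linarith
      obtain ⟨ν', hν'⟩ := Nat.exists_eq_succ_of_ne_zero hν0
      rw [hν'] at hνspec
      have hνspec' : P.S (H (ν'+1)) (k+1+ν'+1) + P.D (H (ν'+1)) (k+1+ν'+1) < s1 := hνspec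
      have hνmin := Nat.find_min hexν (show ν' < Nat.find hexν by omega)
      have htopanti0 := PerronCover.chain_top_antitone P hbadm hbx (Nat.zero_le ν')
      rw [← hH] at htopanti0
      simp only [Nat.add_zero] at htopanti0
      have hplat : P.S (H ν') (k+1+ν') + P.D (H ν') (k+1+ν') = s1 :=
        le_antisymm (by linarith) (not_lt.mp hνmin)
      -- data at level ν'
      have hrν : 1 ≤ P.r (H ν') (k+1+ν') := PerronCover.r_pos P _ _
      have hAν : 0 < Aq P (H ν') (k+1+ν') := hHA ν'
      have hv1 : P.r (H ν') (k+1+ν') + 1 ≤ H (ν'+1) (k+1+ν') := hHD ν'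
      have hDν : P.D (H ν') (k+1+ν')
          = Aq P (H ν') (k+1+ν') / (P.r (H ν') (k+1+ν') : ℝ) := PerronCover.D_eq P _ _
      have hSv : P.S (H (ν'+1)) (k+1+ν'+1)
          = P.S (H ν') (k+1+ν') + Aq P (H ν') (k+1+ν') / (H (ν'+1) (k+1+ν') : ℝ) := hHS ν'
      have htopv : P.S (H (ν'+1)) (k+1+ν'+1) + P.D (H (ν'+1)) (k+1+ν'+1)
          = P.S (H ν') (k+1+ν')
            + Aq P (H ν') (k+1+ν') / ((H (ν'+1) (k+1+ν') : ℝ) - 1) := hHT ν'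
      set sν := P.S (H ν') (k+1+ν') with hdsν
      set Aν := Aq P (H ν') (k+1+ν') with hdAν
      set rν := P.r (H ν') (k+1+ν') with hdrν
      set v := H (ν'+1) (k+1+ν') with hdv
      have hrνR : (1:ℝ) ≤ (rν:ℝ) := by exact_mod_cast hrν
      have htopν : sν + Aν / (rν:ℝ) = s1 := by rw [← hDν]; exact hplat
      have hmemv : P.S (H (ν'+1)) (k+1+ν'+1) < x₁ ∧
          x₁ ≤ P.S (H (ν'+1)) (k+1+ν'+1) + P.D (H (ν'+1)) (k+1+ν'+1) := hHmem (ν'+1)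
      have hmv1 : sν + Aν / (v:ℝ) < x₁ := by
        have h := hmemv.1
        rw [hSv] at h
        exact h
      have hmv2 : x₁ ≤ sν + Aν / ((v:ℝ) - 1) := by
        have h := hmemv.2
        rw [htopv] at h
        exact h
      have hνlt : sν + Aν / ((v:ℝ) - 1) < s1 := by
        rw [← htopv]
        exact hνspec'
      have hv2 : rν + 2 ≤ v := by
        by_contra hco
        push_neg at hco
        have hveq : v = rν + 1 := by omega
        have hc2 : (v:ℝ) - 1 = (rν:ℝ) := by rw [hveq]; push_cast; ring
        rw [hc2, htopν] at hνlt
        exact lt_irrefl _ hνlt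
      have hvR : (rν:ℝ) + 2 ≤ (v:ℝ) := by exact_mod_cast hv2
      have hsh1 := PerronCover.div_shift Aν (rν:ℝ) (by linarith)
      have hsh2' := PerronCover.div_shift Aν ((v:ℝ)-1) (by linarith)
      have e2 : (v:ℝ) - 1 + 1 = (v:ℝ) := by ring
      rw [e2] at hsh2'
      have h5 : Aν/(((v:ℝ)-1)*(v:ℝ)) ≤ Aν/(((rν:ℝ)+1)*((rν:ℝ)+2)) :=
        PerronCover.divA_le hAν.le (PerronCover.sq_pos1 hrνR) (PerronCover.sq_ineq1 hrνR hvR)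
      have h6 : Aν/(((rν:ℝ)+1)*((rν:ℝ)+2)) < Aν/((rν:ℝ)*((rν:ℝ)+1)) :=
        PerronCover.divA_lt hAν (PerronCover.sq_pos2 hrνR) (PerronCover.sq_lt1 hrνR)
      have h7 : Aν/((v:ℝ)-1) ≤ Aν/((rν:ℝ)+1) :=
        PerronCover.divA_le hAν.le (by linarith) (by linarith)
      have hx1le : x₁ ≤ sν + Aν/((rν:ℝ)+1) := le_trans hmv2 (by linarith)
      have hDF : Aν/((v:ℝ)-1) - Aν/(v:ℝ) < s1 - x₁ := by
        linarith [hsh1, hsh2', h5, h6, hx1le, htopν]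
      rcases le_or_gt (x₂ - s1) (s1 - x₁) with he | he
      · -- e ≤ β : use piece₁, piece₂ and R₃
        have hdR3 : A1/(iR-1) ≤ x₂ - x₁ := by linarith [hd2, hd2le, hAi2e]
        have hcastv : ((v-1:ℕ):ℝ) = (v:ℝ) - 1 := by
          rw [Nat.cast_sub (by omega), Nat.cast_one]
        have hp2mem : Set.Ioc (sν + Aν/((v:ℝ)-1)) s1 ∈ P.famP := by
          have h := PerronCover.famP_Icc P (hHadm ν') (n := rν) (m := v - 1)
            (le_refl _) (by omega)
          rw [hcastv] at h
          rw [← hdsν, ← hdAν] at h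
          rw [htopν] at h
          exact h
        rcases eq_or_lt_of_le hmv2 with heq | hlt2
        · -- x₁ is exactly the top of the deeper cylinder
          refine ⟨Set.Ioc (sν + Aν/((v:ℝ)-1)) s1, Set.Ioc (sν + Aν/((v:ℝ)-1)) s1,
            Set.Ioc s1 (s1 + A1 / (iR - 1)), hp2mem, hp2mem, hR3mem, ?_, ?_, ?_, ?_⟩
          · intro y hy
            simp only [Set.mem_union, Set.mem_Ioc] at hy ⊢
            obtain ⟨hy1, hy2⟩ := hy
            by_cases hc : y ≤ s1
            · exact Or.inl (Or.inl ⟨by rw [← heq]; exact hy1, hc⟩)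
            · push_neg at hc
              exact Or.inr ⟨hc, by linarith⟩
          · rw [EMetric.diam, Real.ediam_Ioc]
            exact ENNReal.ofReal_le_ofReal (by linarith)
          · rw [EMetric.diam, Real.ediam_Ioc]
            exact ENNReal.ofReal_le_ofReal (by linarith)
          · rw [EMetric.diam, Real.ediam_Ioc]
            exact ENNReal.ofReal_le_ofReal (by linarith)
        · -- x₁ is strictly inside : descend further to build piece₁
          have hexμ : ∃ m, P.S (H m) (k+1+m) + P.D (H m) (k+1+m)
              < sν + Aν / ((v:ℝ)-1) := by
            obtain ⟨m, hm⟩ := PerronCover.chain_D_small P hbadm hbx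
              (show 0 < sν + Aν/((v:ℝ)-1) - x₁ by linarith)
            rw [← hH] at hm
            exact ⟨m, by linarith [(hHmem m).1]⟩
          have hμspec := Nat.find_spec hexμ
          have hμgt : ν' + 1 < Nat.find hexμ := by
            by_contra hco
            push_neg at hco
            have hanti := PerronCover.chain_top_antitone P hbadm hbx hco
            rw [← hH] at hanti
            have hanti' : P.S (H (ν'+1)) (k+1+ν'+1) + P.D (H (ν'+1)) (k+1+ν'+1)
                ≤ P.S (H (Nat.find hexμ)) (k+1+Nat.find hexμ)
                  + P.D (H (Nat.find hexμ)) (k+1+Nat.find hexμ) := hanti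
            rw [htopv] at hanti'
            linarith
          obtain ⟨μ', hμ'⟩ := Nat.exists_eq_succ_of_ne_zero
            (show Nat.find hexμ ≠ 0 by omega)
          rw [hμ'] at hμspec
          have hμspec' : P.S (H (μ'+1)) (k+1+μ'+1) + P.D (H (μ'+1)) (k+1+μ'+1)
              < sν + Aν / ((v:ℝ)-1) := hμspec
          have hμν : ν' + 1 ≤ μ' := by omega
          have hμmin := Nat.find_min hexμ (show μ' < Nat.find hexμ by omega)
          have hantiμ0 := PerronCover.chain_top_antitone P hbadm hbx hμν
          rw [← hH] at hantiμ0
          have hantiμ : P.S (H μ') (k+1+μ') + P.D (H μ') (k+1+μ')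
              ≤ P.S (H (ν'+1)) (k+1+ν'+1) + P.D (H (ν'+1)) (k+1+ν'+1) := hantiμ0
          rw [htopv] at hantiμ
          have hplat2 : P.S (H μ') (k+1+μ') + P.D (H μ') (k+1+μ')
              = sν + Aν / ((v:ℝ)-1) := le_antisymm hantiμ (not_lt.mp hμmin)
          -- data at level μ'
          have hrμ : 1 ≤ P.r (H μ') (k+1+μ') := PerronCover.r_pos P _ _
          have hAμ : 0 < Aq P (H μ') (k+1+μ') := hHA μ'
          have hvμ1 : P.r (H μ') (k+1+μ') + 1 ≤ H (μ'+1) (k+1+μ') := hHD μ'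
          have hDμ : P.D (H μ') (k+1+μ')
              = Aq P (H μ') (k+1+μ') / (P.r (H μ') (k+1+μ') : ℝ) := PerronCover.D_eq P _ _
          have hSvμ : P.S (H (μ'+1)) (k+1+μ'+1)
              = P.S (H μ') (k+1+μ') + Aq P (H μ') (k+1+μ') / (H (μ'+1) (k+1+μ') : ℝ) :=
            hHS μ'
          have htopvμ : P.S (H (μ'+1)) (k+1+μ'+1) + P.D (H (μ'+1)) (k+1+μ'+1)
              = P.S (H μ') (k+1+μ')
                + Aq P (H μ') (k+1+μ') / ((H (μ'+1) (k+1+μ') : ℝ) - 1) := hHT μ'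
          set sμ := P.S (H μ') (k+1+μ') with hdsμ
          set Aμ := Aq P (H μ') (k+1+μ') with hdAμ
          set rμ := P.r (H μ') (k+1+μ') with hdrμ
          set v₂ := H (μ'+1) (k+1+μ') with hdv₂
          have htopμ : sμ + Aμ / (rμ:ℝ) = sν + Aν / ((v:ℝ)-1) := by
            rw [← hDμ]; exact hplat2
          have hmemvμ : P.S (H (μ'+1)) (k+1+μ'+1) < x₁ ∧
              x₁ ≤ P.S (H (μ'+1)) (k+1+μ'+1) + P.D (H (μ'+1)) (k+1+μ'+1) := hHmem (μ'+1)
          have hmvμ1 : sμ + Aμ / (v₂:ℝ) < x₁ := by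
            have h := hmemvμ.1
            rw [hSvμ] at h
            exact h
          have hμlt : sμ + Aμ / ((v₂:ℝ) - 1) < sν + Aν/((v:ℝ)-1) := by
            rw [← htopvμ]
            exact hμspec'
          have hv₂2 : rμ + 2 ≤ v₂ := by
            by_contra hco
            push_neg at hco
            have hveq : v₂ = rμ + 1 := by omega
            have hc2 : (v₂:ℝ) - 1 = (rμ:ℝ) := by rw [hveq]; push_cast; ring
            rw [hc2, htopμ] at hμlt
            exact lt_irrefl _ hμlt
          -- diameter of piece₁ : at most D (H (ν'+1))
          have hDanti0 := PerronCover.chain_D_antitone P hbadm hbx hμν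
          rw [← hH] at hDanti0
          have hDanti : P.D (H μ') (k+1+μ') ≤ P.D (H (ν'+1)) (k+1+ν'+1) := hDanti0
          have hDν1 : P.D (H (ν'+1)) (k+1+ν'+1) = Aν/((v:ℝ)-1) - Aν/(v:ℝ) := by
            linarith [htopv, hSv]
          have hDμ' : P.D (H μ') (k+1+μ') = Aμ / (rμ:ℝ) := hDμ
          have hAμv₂ : 0 < Aμ / (v₂:ℝ) := by
            have : (0:ℝ) < (v₂:ℝ) := by
              have : (2:ℝ) ≤ (v₂:ℝ) := by exact_mod_cast (by omega : 2 ≤ v₂)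
              linarith
            positivity
          have hp1mem : Set.Ioc (sμ + Aμ/(v₂:ℝ)) (sν + Aν/((v:ℝ)-1)) ∈ P.famP := by
            have h := PerronCover.famP_Icc P (hHadm μ') (n := rμ) (m := v₂)
              (le_refl _) (by omega)
            rw [← hdsμ, ← hdAμ] at h
            rw [htopμ] at h
            exact h
          have hcastv : ((v-1:ℕ):ℝ) = (v:ℝ) - 1 := by
            rw [Nat.cast_sub (by omega), Nat.cast_one]
          refine ⟨Set.Ioc (sμ + Aμ/(v₂:ℝ)) (sν + Aν/((v:ℝ)-1)),
            Set.Ioc (sν + Aν/((v:ℝ)-1)) s1,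
            Set.Ioc s1 (s1 + A1 / (iR - 1)), hp1mem, hp2mem, hR3mem, ?_, ?_, ?_, ?_⟩
          · intro y hy
            simp only [Set.mem_union, Set.mem_Ioc] at hy ⊢
            obtain ⟨hy1, hy2⟩ := hy
            by_cases hc : y ≤ sν + Aν/((v:ℝ)-1)
            · exact Or.inl (Or.inl ⟨by linarith, hc⟩)
            · push_neg at hc
              by_cases hc2 : y ≤ s1
              · exact Or.inl (Or.inr ⟨hc, hc2⟩)
              · push_neg at hc2
                exact Or.inr ⟨hc2, by linarith⟩
          · rw [EMetric.diam, Real.ediam_Ioc]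
            apply ENNReal.ofReal_le_ofReal
            -- diam piece₁ ≤ D (H μ') ≤ D (H (ν'+1)) < s1 - x₁ ≤ x₂ - x₁
            have h1 : sν + Aν/((v:ℝ)-1) - (sμ + Aμ/(v₂:ℝ)) ≤ Aμ / (rμ:ℝ) := by
              linarith [htopμ]
            rw [hDν1] at hDanti
            rw [hDμ'] at hDanti
            linarith
          · rw [EMetric.diam, Real.ediam_Ioc]
            exact ENNReal.ofReal_le_ofReal (by linarith)
          · rw [EMetric.diam, Real.ediam_Ioc]
            exact ENNReal.ofReal_le_ofReal (by linarith)
      · -- β < e : one left set reaching s1, then R₁ and R₂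
        have hLmem : Set.Ioc (sν + Aν/(v:ℝ)) s1 ∈ P.famP := by
          have h := PerronCover.famP_Icc P (hHadm ν') (n := rν) (m := v)
            (le_refl _) (by omega)
          rw [← hdsν, ← hdAν] at h
          rw [htopν] at h
          exact h
        refine ⟨Set.Ioc (sν + Aν/(v:ℝ)) s1, Set.Ioc s1 (s1 + A1 / iR),
          Set.Ioc (s1 + A1 / iR) (s1 + A1 / (iR - 1)), hLmem, hR1mem, hR2mem,
          ?_, ?_, ?_, ?_⟩
        · intro y hy
          simp only [Set.mem_union, Set.mem_Ioc] at hy ⊢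
          obtain ⟨hy1, hy2⟩ := hy
          by_cases hc : y ≤ s1
          · exact Or.inl (Or.inl ⟨by linarith, hc⟩)
          · push_neg at hc
            by_cases hc2 : y ≤ s1 + A1 / iR
            · exact Or.inl (Or.inr ⟨hc, hc2⟩)
            · push_neg at hc2
              exact Or.inr ⟨hc2, by linarith⟩
        · rw [EMetric.diam, Real.ediam_Ioc]
          apply ENNReal.ofReal_le_ofReal
          -- s1 - (sν + Aν/v) = (s1 - x₁) + (x₁ - sν - Aν/v) < β + DF-bound < β + e
          linarith [hmv2, hDF]
        · rw [EMetric.diam, Real.ediam_Ioc]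
          exact ENNReal.ofReal_le_ofReal (by linarith)
        · rw [EMetric.diam, Real.ediam_Ioc]
          exact ENNReal.ofReal_le_ofReal (by linarith)
    · -- Case B : there are whole children of the level-k cylinder between x₁ and x₂
      have hjwR : wR + 1 ≤ (j:ℝ) := by
        rw [hdw]
        exact_mod_cast hjw
      have hsh1 := PerronCover.div_shift A0 (j:ℝ) hjR1
      have hsh2 := PerronCover.div_shift A0 ((j:ℝ)-1) (by linarith)
      have e2 : (j:ℝ) - 1 + 1 = (j:ℝ) := by ring
      rw [e2] at hsh2
      have h3 : A0 / ((j:ℝ)*((j:ℝ)+1)) ≤ A0 / (((j:ℝ)-1)*(j:ℝ)) := by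
        apply PerronCover.divA_le hA0.le (PerronCover.sq_pos3 hwR hjwR)
        exact PerronCover.sq_ineq2 (by linarith)
      have h4 : A0 / ((j:ℝ)-1) ≤ A0 / wR := by
        apply PerronCover.divA_le hA0.le (by linarith) (by linarith)
      -- γ ≤ d₁ :
      have hγd : A0 / (j:ℝ) - A0 / ((j:ℝ)+1) ≤ A0 / wR - A0 / (j:ℝ) := by
        linarith
      have hd1β : A0 / wR - A0 / (j:ℝ) ≤ s1 - x₁ := by
        rw [hs1]
        linarith
      rcases le_or_gt (x₂ - s1) (s1 - x₁) with he | he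
      · -- e ≤ β : sets L₁ (child of x₁), L₂ (middle children) and R₃
        have hdR3 : A1/(iR-1) ≤ x₂ - x₁ := by linarith [hd2, hd2le, hAi2e]
        have hL1mem : Set.Ioc (s0 + A0/((j:ℝ)+1)) (s0 + A0/(j:ℝ)) ∈ P.famP := by
          have h := PerronCover.famP_Icc P (hadm k) (n := j) (m := j+1) hj_ge (by omega)
          rw [hcastj, ← hds0, ← hdA0] at h
          exact h
        have hL2mem : Set.Ioc (s0 + A0/(j:ℝ)) s1 ∈ P.famP := by
          have h := PerronCover.famP_Icc P (hadm k) (n := Z (k+1) k) (m := j)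
            (by omega) hjw
          rw [← hds0, ← hdA0, ← hdw, ← hs1] at h
          exact h
        refine ⟨Set.Ioc (s0 + A0/((j:ℝ)+1)) (s0 + A0/(j:ℝ)),
          Set.Ioc (s0 + A0/(j:ℝ)) s1,
          Set.Ioc s1 (s1 + A1 / (iR - 1)), hL1mem, hL2mem, hR3mem, ?_, ?_, ?_, ?_⟩
        · intro y hy
          simp only [Set.mem_union, Set.mem_Ioc] at hy ⊢
          obtain ⟨hy1, hy2⟩ := hy
          by_cases hc : y ≤ s0 + A0/(j:ℝ)
          · exact Or.inl (Or.inl ⟨by linarith, hc⟩)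
          · push_neg at hc
            by_cases hc2 : y ≤ s1
            · exact Or.inl (Or.inr ⟨hc, hc2⟩)
            · push_neg at hc2
              exact Or.inr ⟨hc2, by linarith⟩
        · rw [EMetric.diam, Real.ediam_Ioc]
          apply ENNReal.ofReal_le_ofReal
          linarith
        · rw [EMetric.diam, Real.ediam_Ioc]
          apply ENNReal.ofReal_le_ofReal
          linarith
        · rw [EMetric.diam, Real.ediam_Ioc]
          exact ENNReal.ofReal_le_ofReal (by linarith)
      · -- β < e : one left set reaching s1, then R₁ and R₂
        have hLmem : Set.Ioc (s0 + A0/((j:ℝ)+1)) s1 ∈ P.famP := by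
          have h := PerronCover.famP_Icc P (hadm k) (n := Z (k+1) k) (m := j+1)
            (by omega) (by omega)
          rw [hcastj, ← hds0, ← hdA0, ← hdw, ← hs1] at h
          exact h
        refine ⟨Set.Ioc (s0 + A0/((j:ℝ)+1)) s1, Set.Ioc s1 (s1 + A1 / iR),
          Set.Ioc (s1 + A1 / iR) (s1 + A1 / (iR - 1)), hLmem, hR1mem, hR2mem,
          ?_, ?_, ?_, ?_⟩
        · intro y hy
          simp only [Set.mem_union, Set.mem_Ioc] at hy ⊢
          obtain ⟨hy1, hy2⟩ := hy
          by_cases hc : y ≤ s1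
          · exact Or.inl (Or.inl ⟨by linarith, hc⟩)
          · push_neg at hc
            by_cases hc2 : y ≤ s1 + A1 / iR
            · exact Or.inl (Or.inr ⟨hc, hc2⟩)
            · push_neg at hc2
              exact Or.inr ⟨hc2, by linarith⟩
        · rw [EMetric.diam, Real.ediam_Ioc]
          apply ENNReal.ofReal_le_ofReal
          -- s1 - (s0 + A0/(j+1)) = β + (x₁ - s0 - A0/(j+1)) ≤ β + γ ≤ β + β < β + e
          have hb : x₁ ≤ s0 + A0/(j:ℝ) := hjle
          linarith [hγd, hd1β]
        · rw [EMetric.diam, Real.ediam_Ioc]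
          exact ENNReal.ofReal_le_ofReal (by linarith)
        · rw [EMetric.diam, Real.ediam_Ioc]
          exact ENNReal.ofReal_le_ofReal (by linarith)
end

section
/- Let P be a Perron system and 𝔓 the associated family of unions of consecutive P-cylinders. Then for every set E ⊆ (0,1] and every α > 0 one has H^α(E) ≤ H^α(E, 𝔓) ≤ 3·H^α(E), where H^α denotes the usual α-dimensional Hausdorff measure; consequently 𝔓 is a faithful family of coverings for the Hausdorff dimension calculation on (0,1], i.e. dim_H(E, 𝔓) = dim_H(E) for every E ⊆ (0,1]. -/
open Set Filter MeasureTheory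
open scoped ENNReal

noncomputable section

namespace PerronSystem

variable (P : PerronSystem)

lemma ediam_alias_eq (s : Set ℝ) : EMetric.diam s = Metric.ediam s := rfl

lemma r_pos (c : ℕ → ℕ) (n : ℕ) : 0 < P.r c n := P.φ_pos _

lemma r_congr {c c' : ℕ → ℕ} {n : ℕ} (h : ∀ j < n, c j = c' j) :
    P.r c n = P.r c' n := by
  have he : (fun j : Fin n => c j) = fun j : Fin n => c' j := funext fun j => h j j.isLt
  unfold r
  rw [he]

lemma qprod_congr {c c' : ℕ → ℕ} {n : ℕ} (h : ∀ j < n, c j = c' j) :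
    qprod c n = qprod c' n := by
  unfold qprod
  exact Finset.prod_congr rfl fun i hi => by rw [h i (Finset.mem_range.1 hi)]

lemma rprod_congr {c c' : ℕ → ℕ} {n : ℕ} (h : ∀ j, j + 1 < n → c j = c' j) :
    P.rprod c n = P.rprod c' n := by
  unfold rprod
  refine Finset.prod_congr rfl fun i hi => ?_
  have : P.r c i = P.r c' i :=
    P.r_congr fun j hj => h j (by have := Finset.mem_range.1 hi; omega)
  rw [this]

lemma S_congr {c c' : ℕ → ℕ} {k : ℕ} (h : ∀ j < k, c j = c' j) :
    P.S c k = P.S c' k := by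
  unfold S
  refine Finset.sum_congr rfl fun n hn => ?_
  have hn' := Finset.mem_range.1 hn
  rw [P.rprod_congr (fun j hj => h j (by omega)), qprod_congr (fun j hj => h j (by omega)),
    h n hn']

lemma D_congr {c c' : ℕ → ℕ} {k : ℕ} (h : ∀ j < k, c j = c' j) :
    P.D c k = P.D c' k := by
  unfold D
  rw [P.rprod_congr (fun j hj => h j (by omega)), qprod_congr h]

lemma c_two {c : ℕ → ℕ} {k : ℕ} (h : P.AdmissibleUpTo c k) {i : ℕ} (hi : i < k) :
    2 ≤ c i := le_trans (by have := P.r_pos c i; omega) (h i hi)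

lemma qprod_pos {c : ℕ → ℕ} {k : ℕ} (h : P.AdmissibleUpTo c k) {n : ℕ} (hn : n ≤ k) :
    0 < qprod c n := by
  refine Finset.prod_pos fun i hi => ?_
  have h2 : 2 ≤ c i := P.c_two h (lt_of_lt_of_le (Finset.mem_range.1 hi) hn)
  have : (2 : ℝ) ≤ (c i : ℝ) := by exact_mod_cast h2
  nlinarith

lemma rprod_pos (c : ℕ → ℕ) (n : ℕ) : 0 < P.rprod c n := by
  refine Finset.prod_pos fun i _ => ?_
  exact_mod_cast P.r_pos c i

lemma D_pos {c : ℕ → ℕ} {k : ℕ} (h : P.AdmissibleUpTo c k) : 0 < P.D c k :=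
  div_pos (P.rprod_pos c k) (P.qprod_pos h le_rfl)

/-- `R = r₀⋯r_k / ((c₁−1)c₁⋯(c_k−1)c_k)`, the common scale of the rank-`(k+1)` subcylinders. -/
def ratio (c : ℕ → ℕ) (k : ℕ) : ℝ := P.rprod c (k + 1) / qprod c k

lemma rprod_succ (c : ℕ → ℕ) (n : ℕ) :
    P.rprod c (n + 1) = P.rprod c n * (P.r c n : ℝ) := Finset.prod_range_succ _ _

lemma qprod_succ (c : ℕ → ℕ) (n : ℕ) :
    qprod c (n + 1) = qprod c n * (((c n : ℝ) - 1) * (c n : ℝ)) := Finset.prod_range_succ _ _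

lemma S_succ (c : ℕ → ℕ) (k : ℕ) :
    P.S c (k + 1) = P.S c k + P.rprod c (k + 1) / (qprod c k * (c k : ℝ)) :=
  Finset.sum_range_succ _ _

lemma ratio_pos {c : ℕ → ℕ} {k : ℕ} (h : P.AdmissibleUpTo c k) : 0 < P.ratio c k :=
  div_pos (P.rprod_pos c (k + 1)) (P.qprod_pos h le_rfl)

lemma ratio_div_r {c : ℕ → ℕ} {k : ℕ} (h : P.AdmissibleUpTo c k) :
    P.ratio c k / (P.r c k : ℝ) = P.D c k := by
  have hr : (0 : ℝ) < (P.r c k : ℝ) := by exact_mod_cast P.r_pos c k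
  have hq : qprod c k ≠ 0 := (P.qprod_pos h le_rfl).ne'
  rw [ratio, D, P.rprod_succ]
  field_simp

lemma adm_update {c : ℕ → ℕ} {k : ℕ} (h : P.AdmissibleUpTo c k) {i : ℕ}
    (hi : P.r c k + 1 ≤ i) : P.AdmissibleUpTo (Function.update c k i) (k + 1) := by
  intro j hj
  have hupd : ∀ l < k, Function.update c k i l = c l := fun l hl =>
    Function.update_of_ne (by omega) _ _
  rcases Nat.lt_or_ge j k with hjk | hjk
  · have : P.r (Function.update c k i) j = P.r c j :=
      P.r_congr fun l hl => hupd l (by omega)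
    rw [this, Function.update_of_ne (by omega)]
    exact h j hjk
  · have hjk' : j = k := by omega
    have : P.r (Function.update c k i) j = P.r c j :=
      P.r_congr fun l hl => hupd l (by omega)
    rw [this, hjk', Function.update_self]
    exact hi

lemma S_update {c : ℕ → ℕ} {k : ℕ} (h : P.AdmissibleUpTo c k) {i : ℕ}
    (hi : P.r c k + 1 ≤ i) :
    P.S (Function.update c k i) (k + 1) = P.S c k + P.ratio c k / (i : ℝ) := by
  have hupd : ∀ l < k, Function.update c k i l = c l := fun l hl =>
    Function.update_of_ne (by omega) _ _
  rw [S_succ, P.S_congr hupd, P.rprod_congr (fun j hj => hupd j (by omega)),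
    qprod_congr hupd, Function.update_self, ratio, div_div]

lemma D_update {c : ℕ → ℕ} {k : ℕ} (h : P.AdmissibleUpTo c k) {i : ℕ}
    (hi : P.r c k + 1 ≤ i) :
    P.D (Function.update c k i) (k + 1) = P.ratio c k / (((i : ℝ) - 1) * (i : ℝ)) := by
  have hupd : ∀ l < k, Function.update c k i l = c l := fun l hl =>
    Function.update_of_ne (by omega) _ _
  rw [D, P.rprod_congr (fun j hj => hupd j (by omega)), qprod_succ, qprod_congr hupd,
    Function.update_self, ratio, div_div]

lemma cyl_update {c : ℕ → ℕ} {k : ℕ} (h : P.AdmissibleUpTo c k) {i : ℕ}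
    (hi : P.r c k + 1 ≤ i) :
    P.cyl (Function.update c k i) (k + 1) =
      Ioc (P.S c k + P.ratio c k / (i : ℝ)) (P.S c k + P.ratio c k / ((i : ℝ) - 1)) := by
  have h2 : 2 ≤ i := by have := P.r_pos c k; omega
  have hi2 : (2 : ℝ) ≤ (i : ℝ) := by exact_mod_cast h2
  have hR := P.ratio_pos h
  have hi0 : (i : ℝ) ≠ 0 := by positivity
  have hi1 : (i : ℝ) - 1 ≠ 0 := by nlinarith
  have key : P.ratio c k / (i : ℝ) + P.ratio c k / (((i : ℝ) - 1) * (i : ℝ)) =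
      P.ratio c k / ((i : ℝ) - 1) := by field_simp; ring
  rw [cyl, P.S_update h hi, P.D_update h hi, add_assoc, key]

/-- Finite union of consecutive subintervals. -/
lemma iUnion_Icc_Ioc {B Rv : ℝ} (hR : 0 < Rv) {n m : ℕ} (h2 : 2 ≤ n) (hnm : n ≤ m) :
    ⋃ i ∈ Finset.Icc n m, Ioc (B + Rv / (i : ℝ)) (B + Rv / ((i : ℝ) - 1)) =
      Ioc (B + Rv / (m : ℝ)) (B + Rv / ((n : ℝ) - 1)) := by
  induction m with
  | zero => omega
  | succ m ih =>
    rcases Nat.lt_or_ge m n with hmn | hmn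
    · have hmn' : n = m + 1 := by omega
      subst hmn'
      simp
    · have hun := ih hmn
      have hicc : Finset.Icc n (m + 1) = insert (m + 1) (Finset.Icc n m) := by
        ext j
        simp only [Finset.mem_Icc, Finset.mem_insert]
        omega
      rw [hicc, Finset.set_biUnion_insert, hun]
      have hm0 : (0 : ℝ) < (m : ℝ) := by
        have : 2 ≤ m := le_trans h2 hmn
        exact_mod_cast Nat.lt_of_lt_of_le (by norm_num) this
      have hn1 : (0 : ℝ) < (n : ℝ) - 1 := by
        have : (2 : ℝ) ≤ (n : ℝ) := by exact_mod_cast h2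
        linarith
      have e1 : ((m + 1 : ℕ) : ℝ) - 1 = (m : ℝ) := by push_cast; ring
      have e2 : ((m + 1 : ℕ) : ℝ) = (m : ℝ) + 1 := by push_cast; ring
      rw [e1, e2]
      apply Ioc_union_Ioc_eq_Ioc
      · have : Rv / ((m : ℝ) + 1) ≤ Rv / (m : ℝ) :=
          div_le_div_of_nonneg_left hR.le hm0 (by linarith)
        linarith
      · have hmn' : (n : ℝ) - 1 ≤ (m : ℝ) := by
          have : (n : ℝ) ≤ (m : ℝ) := by exact_mod_cast hmn
          linarith
        have : Rv / (m : ℝ) ≤ Rv / ((n : ℝ) - 1) :=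
          div_le_div_of_nonneg_left hR.le hn1 hmn'
        linarith

/-- Infinite union of consecutive subintervals. -/
lemma iUnion_ge_Ioc {B Rv : ℝ} (hR : 0 < Rv) {n : ℕ} (h2 : 2 ≤ n) :
    ⋃ i ∈ {j : ℕ | n ≤ j}, Ioc (B + Rv / (i : ℝ)) (B + Rv / ((i : ℝ) - 1)) =
      Ioc B (B + Rv / ((n : ℝ) - 1)) := by
  have hn1 : (0 : ℝ) < (n : ℝ) - 1 := by
    have : (2 : ℝ) ≤ (n : ℝ) := by exact_mod_cast h2
    linarith
  apply Set.Subset.antisymm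
  · refine Set.iUnion₂_subset fun i hi => ?_
    have hi' : n ≤ i := hi
    have hi0 : (0 : ℝ) < (i : ℝ) := by
      have : 2 ≤ i := le_trans h2 hi'
      exact_mod_cast Nat.lt_of_lt_of_le (by norm_num) this
    refine Ioc_subset_Ioc ?_ ?_
    · have : 0 < Rv / (i : ℝ) := div_pos hR hi0
      linarith
    · have : (n : ℝ) - 1 ≤ (i : ℝ) - 1 := by
        have : (n : ℝ) ≤ (i : ℝ) := by exact_mod_cast hi'
        linarith
      have := div_le_div_of_nonneg_left hR.le hn1 this
      linarith
  · intro x hx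
    obtain ⟨hx1, hx2⟩ := hx
    obtain ⟨m0, hm0⟩ := exists_nat_gt (Rv / (x - B))
    set m := max n m0 with hm
    have hmn : n ≤ m := le_max_left _ _
    have hm2 : 2 ≤ m := le_trans h2 hmn
    have hm0' : (0 : ℝ) < (m : ℝ) := by
      exact_mod_cast Nat.lt_of_lt_of_le (by norm_num) hm2
    have hxB : 0 < x - B := by linarith
    have hRm : Rv / (m : ℝ) < x - B := by
      rw [div_lt_iff₀ hm0']
      have h1 : Rv / (x - B) < (m : ℝ) := lt_of_lt_of_le hm0 (by exact_mod_cast le_max_right n m0)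
      calc Rv = Rv / (x - B) * (x - B) := by field_simp
      _ < (m : ℝ) * (x - B) := by
          exact mul_lt_mul_of_pos_right h1 hxB
      _ = (x - B) * (m : ℝ) := by ring
    have hx' : x ∈ Ioc (B + Rv / (m : ℝ)) (B + Rv / ((n : ℝ) - 1)) :=
      ⟨by linarith, hx2⟩
    rw [← iUnion_Icc_Ioc hR h2 hmn] at hx'
    simp only [Set.mem_iUnion, Finset.mem_Icc] at hx'
    obtain ⟨i, ⟨hni, him⟩, hxi⟩ := hx'
    exact Set.mem_biUnion (show i ∈ {j : ℕ | n ≤ j} from hni) hxi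
lemma n_two {P : PerronSystem} {c : ℕ → ℕ} {k n : ℕ} (hn : P.r c k + 1 ≤ n) : 2 ≤ n := by
  have := P.r_pos c k; omega

lemma Ioc_mem_famP_fin {c : ℕ → ℕ} {k n m : ℕ} (h : P.AdmissibleUpTo c k)
    (hn : P.r c k + 1 ≤ n) (hnm : n ≤ m) :
    Ioc (P.S c k + P.ratio c k / (m : ℝ)) (P.S c k + P.ratio c k / ((n : ℝ) - 1)) ∈ P.famP := by
  refine ⟨c, k, n, h, hn, Or.inl ⟨m, hnm, ?_⟩⟩
  rw [show (⋃ i ∈ Finset.Icc n m, P.cyl (Function.update c k i) (k + 1)) =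
      ⋃ i ∈ Finset.Icc n m,
        Ioc (P.S c k + P.ratio c k / (i : ℝ)) (P.S c k + P.ratio c k / ((i : ℝ) - 1)) from
    Set.iUnion₂_congr fun i hi =>
      P.cyl_update h (le_trans hn (Finset.mem_Icc.1 hi).1)]
  rw [iUnion_Icc_Ioc (P.ratio_pos h) (n_two hn) hnm]

lemma Ioc_mem_famP_inf {c : ℕ → ℕ} {k n : ℕ} (h : P.AdmissibleUpTo c k)
    (hn : P.r c k + 1 ≤ n) :
    Ioc (P.S c k) (P.S c k + P.ratio c k / ((n : ℝ) - 1)) ∈ P.famP := by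
  refine ⟨c, k, n, h, hn, Or.inr ?_⟩
  rw [show (⋃ i ∈ {j : ℕ | n ≤ j}, P.cyl (Function.update c k i) (k + 1)) =
      ⋃ i ∈ {j : ℕ | n ≤ j},
        Ioc (P.S c k + P.ratio c k / (i : ℝ)) (P.S c k + P.ratio c k / ((i : ℝ) - 1)) from
    Set.iUnion₂_congr fun i hi => P.cyl_update h (le_trans hn hi)]
  rw [iUnion_ge_Ioc (P.ratio_pos h) (n_two hn)]

lemma top_eq {c : ℕ → ℕ} {k : ℕ} (h : P.AdmissibleUpTo c k) :
    P.S c k + P.ratio c k / (((P.r c k + 1 : ℕ) : ℝ) - 1) = P.S c k + P.D c k := by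
  have : ((P.r c k + 1 : ℕ) : ℝ) - 1 = (P.r c k : ℝ) := by push_cast; ring
  rw [this, P.ratio_div_r h]

lemma cyl_mem_famP {c : ℕ → ℕ} {k : ℕ} (h : P.AdmissibleUpTo c k) : P.cyl c k ∈ P.famP := by
  have := P.Ioc_mem_famP_inf h (le_refl (P.r c k + 1))
  rwa [top_eq P h] at this

lemma exists_digit {c : ℕ → ℕ} {k : ℕ} (h : P.AdmissibleUpTo c k) {x : ℝ}
    (hx : x ∈ P.cyl c k) :
    ∃ i, P.r c k + 1 ≤ i ∧ x ∈ P.cyl (Function.update c k i) (k + 1) := by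
  rw [cyl, ← top_eq P h, ← iUnion_ge_Ioc (P.ratio_pos h) (n_two (le_refl (P.r c k + 1)))]
    at hx
  simp only [Set.mem_iUnion, Set.mem_setOf_eq] at hx
  obtain ⟨i, hi, hxi⟩ := hx
  exact ⟨i, hi, by rw [P.cyl_update h hi]; exact hxi⟩

lemma S_zero (c : ℕ → ℕ) : P.S c 0 = 0 := by simp [S]

lemma D_zero (c : ℕ → ℕ) : P.D c 0 = 1 := by simp [D, rprod, qprod]

lemma cyl_zero (c : ℕ → ℕ) : P.cyl c 0 = Ioc 0 1 := by
  rw [cyl, P.S_zero, P.D_zero, zero_add]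

lemma adm_zero (c : ℕ → ℕ) : P.AdmissibleUpTo c 0 := fun i hi => by omega

lemma D_update_half {c : ℕ → ℕ} {k : ℕ} (h : P.AdmissibleUpTo c k) {i : ℕ}
    (hi : P.r c k + 1 ≤ i) :
    P.D (Function.update c k i) (k + 1) ≤ P.D c k / 2 := by
  have hr : 1 ≤ P.r c k := P.r_pos c k
  have hR := P.ratio_pos h
  have hrR : (0 : ℝ) < (P.r c k : ℝ) := by exact_mod_cast hr
  have h2i : 2 ≤ i := by omega
  have h2iR : (2 : ℝ) ≤ (i : ℝ) := by exact_mod_cast h2i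
  have hii : (P.r c k : ℝ) * 2 ≤ ((i : ℝ) - 1) * (i : ℝ) := by
    have h1 : (P.r c k : ℝ) + 1 ≤ (i : ℝ) := by exact_mod_cast hi
    nlinarith [mul_le_mul_of_nonneg_left h2iR (by linarith : (0:ℝ) ≤ (i:ℝ) - 1)]
  rw [P.D_update h hi, ← P.ratio_div_r h]
  rw [div_div]
  apply div_le_div_of_nonneg_left hR.le (by nlinarith) hii
/-- The next digit of `x` refining the cylinder with base `c` of rank `k`. -/
def nextDigit (c : ℕ → ℕ) (k : ℕ) (x : ℝ) : ℕ :=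
  @dite _ (P.AdmissibleUpTo c k ∧ x ∈ P.cyl c k) (Classical.propDecidable _)
    (fun h => Classical.choose (P.exists_digit h.1 h.2)) (fun _ => 0)

/-- The sequence of digit functions of a point `x ∈ (0,1]`. -/
def digits (x : ℝ) : ℕ → ℕ → ℕ
  | 0 => fun _ => 0
  | k + 1 => Function.update (digits x k) k (nextDigit P (digits x k) k x)

lemma digits_spec {x : ℝ} (hx : x ∈ Ioc (0 : ℝ) 1) (k : ℕ) :
    P.AdmissibleUpTo (P.digits x k) k ∧ x ∈ P.cyl (P.digits x k) k ∧
      P.r (P.digits x k) k + 1 ≤ P.nextDigit (P.digits x k) k x := by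
  induction k with
  | zero =>
    have h0 : P.AdmissibleUpTo (P.digits x 0) 0 := P.adm_zero _
    have h1 : x ∈ P.cyl (P.digits x 0) 0 := by rw [P.cyl_zero]; exact hx
    refine ⟨h0, h1, ?_⟩
    rw [nextDigit, dif_pos ⟨h0, h1⟩]
    exact (Classical.choose_spec (P.exists_digit h0 h1)).1
  | succ k ih =>
    obtain ⟨h0, h1, h2⟩ := ih
    have hd : P.digits x (k + 1) =
        Function.update (P.digits x k) k (P.nextDigit (P.digits x k) k x) := rfl
    have hadm : P.AdmissibleUpTo (P.digits x (k + 1)) (k + 1) := by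
      rw [hd]; exact P.adm_update h0 h2
    have hmem : x ∈ P.cyl (P.digits x (k + 1)) (k + 1) := by
      rw [hd, nextDigit, dif_pos ⟨h0, h1⟩]
      exact (Classical.choose_spec (P.exists_digit h0 h1)).2
    refine ⟨hadm, hmem, ?_⟩
    rw [nextDigit, dif_pos ⟨hadm, hmem⟩]
    exact (Classical.choose_spec (P.exists_digit hadm hmem)).1

lemma digits_D {x : ℝ} (hx : x ∈ Ioc (0 : ℝ) 1) (k : ℕ) :
    P.D (P.digits x k) k ≤ (1 / 2 : ℝ) ^ k := by
  induction k with
  | zero => rw [P.D_zero]; norm_num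
  | succ k ih =>
    obtain ⟨h0, h1, h2⟩ := P.digits_spec hx k
    have hd : P.digits x (k + 1) =
        Function.update (P.digits x k) k (P.nextDigit (P.digits x k) k x) := rfl
    calc P.D (P.digits x (k + 1)) (k + 1) ≤ P.D (P.digits x k) k / 2 := by
          rw [hd]; exact P.D_update_half h0 h2
    _ ≤ (1 / 2 : ℝ) ^ k / 2 := by linarith
    _ = (1 / 2 : ℝ) ^ (k + 1) := by ring

/-- Every point of `(0,1]` lies in sets of `famP` of arbitrarily small diameter. -/
lemma small_mem_famP {x : ℝ} (hx : x ∈ Ioc (0 : ℝ) 1) {η : ℝ} (hη : 0 < η) :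
    ∃ U ∈ P.famP, x ∈ U ∧ EMetric.diam U ≤ ENNReal.ofReal η := by
  obtain ⟨k, hk⟩ := exists_pow_lt_of_lt_one hη (by norm_num : (1 / 2 : ℝ) < 1)
  obtain ⟨h0, h1, -⟩ := P.digits_spec hx k
  refine ⟨P.cyl (P.digits x k) k, P.cyl_mem_famP h0, h1, ?_⟩
  rw [cyl, ediam_alias_eq, Real.ediam_Ioc]
  apply ENNReal.ofReal_le_ofReal
  have := P.digits_D hx k
  linarith

/-- Covering a *prefix* `(S, b]` of a cylinder by a single set of `famP` of diameter
at most `2(b-S)`. -/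
lemma prefix_cover {c : ℕ → ℕ} {k : ℕ} (h : P.AdmissibleUpTo c k) {b : ℝ}
    (hb : b ∈ P.cyl c k) :
    ∃ U ∈ P.famP, Ioc (P.S c k) b ⊆ U ∧
      EMetric.diam U ≤ ENNReal.ofReal (2 * (b - P.S c k)) := by
  obtain ⟨i, hi, hbi⟩ := P.exists_digit h hb
  rw [P.cyl_update h hi] at hbi
  obtain ⟨hb1, hb2⟩ := hbi
  have h2 : 2 ≤ i := n_two hi
  have hx2 : (2 : ℝ) ≤ (i : ℝ) := by exact_mod_cast h2
  have hR := P.ratio_pos h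
  refine ⟨_, P.Ioc_mem_famP_inf h hi, Ioc_subset_Ioc le_rfl hb2, ?_⟩
  rw [ediam_alias_eq, Real.ediam_Ioc]
  apply ENNReal.ofReal_le_ofReal
  have hkey : P.ratio c k / ((i : ℝ) - 1) ≤ 2 * P.ratio c k / (i : ℝ) := by
    rw [div_le_div_iff₀ (by linarith) (by linarith)]
    nlinarith
  have he : 2 * P.ratio c k / (i : ℝ) = 2 * (P.ratio c k / (i : ℝ)) := by ring
  rw [he] at hkey
  have : P.ratio c k / (i : ℝ) < b - P.S c k := by linarith
  linarith

/-- Auxiliary induction for `suffix_cover`. -/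
lemma suffix_cover_aux : ∀ N : ℕ, ∀ (k : ℕ) (c : ℕ → ℕ) (a : ℝ),
    P.AdmissibleUpTo c k → P.S c k ≤ a → a < P.S c k + P.D c k →
    P.D c k ≤ 2 ^ N * (P.S c k + P.D c k - a) →
    ∃ U ∈ P.famP, Ioc a (P.S c k + P.D c k) ⊆ U ∧
      EMetric.diam U ≤ ENNReal.ofReal (2 * (P.S c k + P.D c k - a)) := by
  intro N
  induction N with
  | zero =>
    intro k c a h ha1 ha2 hD
    rw [pow_zero, one_mul] at hD
    have haS : a = P.S c k := by linarith
    subst haS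
    refine ⟨P.cyl c k, P.cyl_mem_famP h, by rw [cyl], ?_⟩
    rw [cyl, ediam_alias_eq, Real.ediam_Ioc]
    apply ENNReal.ofReal_le_ofReal
    linarith
  | succ N ih =>
    intro k c a h ha1 ha2 hD
    rcases eq_or_lt_of_le ha1 with haS | haS
    · refine ⟨P.cyl c k, P.cyl_mem_famP h, ?_, ?_⟩
      · rw [cyl, ← haS]
      · rw [cyl, ediam_alias_eq, Real.ediam_Ioc]
        apply ENNReal.ofReal_le_ofReal
        have := P.D_pos h
        linarith [haS]
    · have ha : a ∈ P.cyl c k := ⟨haS, ha2.le⟩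
      obtain ⟨i, hi, hai⟩ := P.exists_digit h ha
      have hr1 : 1 ≤ P.r c k := P.r_pos c k
      have hR := P.ratio_pos h
      rw [P.cyl_update h hi] at hai
      obtain ⟨ha3, ha4⟩ := hai
      rcases Nat.lt_or_ge i (P.r c k + 2) with hi2 | hi2
      · -- i = r + 1 : recurse into the top subcylinder
        have hieq : i = P.r c k + 1 := by omega
        set c' := Function.update c k i with hc'
        have hadm' : P.AdmissibleUpTo c' (k + 1) := P.adm_update h hi
        have hrR : (0 : ℝ) < (P.r c k : ℝ) := by exact_mod_cast hr1
        have hiR : ((i : ℝ) - 1) = (P.r c k : ℝ) := by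
          rw [hieq]; push_cast; ring
        have htop : P.S c' (k + 1) + P.D c' (k + 1) = P.S c k + P.D c k := by
          rw [P.S_update h hi, P.D_update h hi]
          have hi0 : (i : ℝ) ≠ 0 := by
            have : (0:ℝ) < (i:ℝ) := by rw [hieq]; push_cast; linarith
            linarith
          have hi1 : (i : ℝ) - 1 ≠ 0 := by rw [hiR]; linarith
          have key : P.ratio c k / (i : ℝ) + P.ratio c k / (((i : ℝ) - 1) * (i : ℝ)) =
              P.ratio c k / ((i : ℝ) - 1) := by field_simp; ring
          rw [add_assoc, key, hiR, P.ratio_div_r h]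
        have hD' : P.D c' (k + 1) ≤ 2 ^ N * (P.S c' (k + 1) + P.D c' (k + 1) - a) := by
          rw [htop]
          calc P.D c' (k + 1) ≤ P.D c k / 2 := P.D_update_half h hi
          _ ≤ 2 ^ (N + 1) * (P.S c k + P.D c k - a) / 2 := by linarith
          _ = 2 ^ N * (P.S c k + P.D c k - a) := by ring
        have hS' : P.S c' (k + 1) ≤ a := by
          rw [P.S_update h hi]; exact ha3.le
        have ha2' : a < P.S c' (k + 1) + P.D c' (k + 1) := by rw [htop]; exact ha2
        obtain ⟨U, hU1, hU2, hU3⟩ := ih (k + 1) c' a hadm' hS' ha2' hD'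
        rw [htop] at hU2 hU3
        exact ⟨U, hU1, hU2, hU3⟩
      · -- i ≥ r + 2 : one finite union suffices
        have hfin := P.Ioc_mem_famP_fin h (le_refl (P.r c k + 1)) (le_trans (by omega) hi2)
        rw [top_eq P h] at hfin
        refine ⟨_, hfin, Ioc_subset_Ioc ha3.le le_rfl, ?_⟩
        rw [ediam_alias_eq, Real.ediam_Ioc]
        apply ENNReal.ofReal_le_ofReal
        -- need : S + D - (S + R/i) ≤ 2 * (S + D - a)
        have hx3 : (3 : ℝ) ≤ (i : ℝ) := by exact_mod_cast (by omega : 3 ≤ i)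
        have hrx : (P.r c k : ℝ) ≤ (i : ℝ) - 2 := by
          have : (P.r c k : ℝ) + 2 ≤ (i : ℝ) := by exact_mod_cast hi2
          linarith
        have hrR : (0 : ℝ) < (P.r c k : ℝ) := by exact_mod_cast hr1
        have hkey : 2 / ((i : ℝ) - 1) ≤ 1 / ((i : ℝ) - 2) + 1 / (i : ℝ) := by
          rw [div_add_div _ _ (by linarith : (i:ℝ) - 2 ≠ 0) (by linarith : (i:ℝ) ≠ 0),
            div_le_div_iff₀ (by linarith)
              (mul_pos (by linarith : (0:ℝ) < (i:ℝ) - 2) (by linarith : (0:ℝ) < (i:ℝ)))]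
          nlinarith
        have hkey2 : 1 / ((i : ℝ) - 2) ≤ 1 / (P.r c k : ℝ) :=
          one_div_le_one_div_of_le hrR hrx
        have hkey3 : 2 * (P.ratio c k / ((i : ℝ) - 1)) ≤
            P.ratio c k / (P.r c k : ℝ) + P.ratio c k / (i : ℝ) := by
          have := mul_le_mul_of_nonneg_left
            (le_trans hkey (by linarith : 1 / ((i:ℝ)-2) + 1/(i:ℝ) ≤
              1 / (P.r c k : ℝ) + 1 / (i:ℝ))) hR.le
          calc 2 * (P.ratio c k / ((i : ℝ) - 1)) = P.ratio c k * (2 / ((i:ℝ)-1)) := by ring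
          _ ≤ P.ratio c k * (1 / (P.r c k : ℝ) + 1 / (i:ℝ)) := this
          _ = P.ratio c k / (P.r c k : ℝ) + P.ratio c k / (i : ℝ) := by ring
        rw [← P.ratio_div_r h]
        -- a ≤ S + R/(i-1), so 2(S + D - a) ≥ 2(D - R/(i-1)) = 2D - 2R/(i-1) ≥ D - R/i
        linarith
  done

/-- Covering a *suffix* `(a, S+D]` of a cylinder by a single set of `famP` of diameter
at most `2(S+D-a)`. -/
lemma suffix_cover {c : ℕ → ℕ} {k : ℕ} (h : P.AdmissibleUpTo c k) {a : ℝ}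
    (ha1 : P.S c k ≤ a) (ha2 : a < P.S c k + P.D c k) :
    ∃ U ∈ P.famP, Ioc a (P.S c k + P.D c k) ⊆ U ∧
      EMetric.diam U ≤ ENNReal.ofReal (2 * (P.S c k + P.D c k - a)) := by
  obtain ⟨N, hN⟩ := pow_unbounded_of_one_lt (P.D c k / (P.S c k + P.D c k - a))
    (by norm_num : (1 : ℝ) < 2)
  refine P.suffix_cover_aux N k c a h ha1 ha2 ?_
  have hpos : 0 < P.S c k + P.D c k - a := by linarith
  rw [div_lt_iff₀ hpos] at hN
  linarith
lemma top_update {c : ℕ → ℕ} {k : ℕ} (h : P.AdmissibleUpTo c k) {i : ℕ}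
    (hi : P.r c k + 1 ≤ i) :
    P.S (Function.update c k i) (k + 1) + P.D (Function.update c k i) (k + 1) =
      P.S c k + P.ratio c k / ((i : ℝ) - 1) := by
  have h2 : 2 ≤ i := n_two hi
  have hi2 : (2 : ℝ) ≤ (i : ℝ) := by exact_mod_cast h2
  have hi0 : (i : ℝ) ≠ 0 := by linarith
  have hi1 : (i : ℝ) - 1 ≠ 0 := by linarith
  have key : P.ratio c k / (i : ℝ) + P.ratio c k / (((i : ℝ) - 1) * (i : ℝ)) =
      P.ratio c k / ((i : ℝ) - 1) := by field_simp; ring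
  rw [P.S_update h hi, P.D_update h hi, add_assoc, key]

/-- The main covering lemma: any interval `(a,b] ⊆ (0,1]` is covered by three members
of `famP` (or empty sets), of diameters `≤ b−a`, `≤ 2x`, `≤ 2y` with `x + y ≤ b − a`. -/
lemma interval_cover {a b : ℝ} (ha : 0 ≤ a) (hab : a < b) (hb : b ≤ 1) :
    ∃ (U₁ U₂ U₃ : Set ℝ) (x y : ℝ),
      (U₁ ∈ P.famP ∨ U₁ = ∅) ∧ (U₂ ∈ P.famP ∨ U₂ = ∅) ∧ (U₃ ∈ P.famP ∨ U₃ = ∅) ∧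
      Ioc a b ⊆ U₁ ∪ U₂ ∪ U₃ ∧ 0 ≤ x ∧ 0 ≤ y ∧ x + y ≤ b - a ∧
      EMetric.diam U₁ ≤ ENNReal.ofReal (b - a) ∧
      EMetric.diam U₂ ≤ ENNReal.ofReal (2 * x) ∧
      EMetric.diam U₃ ≤ ENNReal.ofReal (2 * y) := by
  have hbmem : b ∈ Ioc (0 : ℝ) 1 := ⟨lt_of_le_of_lt ha hab, hb⟩
  -- the rank at which the cylinder of `b` separates from `a`
  have hexists : ∃ k, a < P.S (P.digits b k) k := by
    obtain ⟨k, hk⟩ := exists_pow_lt_of_lt_one (by linarith : (0:ℝ) < b - a)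
      (by norm_num : (1 / 2 : ℝ) < 1)
    obtain ⟨-, hmem, -⟩ := P.digits_spec hbmem k
    have hD := P.digits_D hbmem k
    exact ⟨k, by have := hmem.2; linarith⟩
  set k₀ := Nat.find hexists with hk₀
  have hk₀pos : k₀ ≠ 0 := by
    intro h0
    have := Nat.find_spec hexists
    rw [← hk₀, h0] at this
    rw [P.S_zero] at this
    linarith
  obtain ⟨k, hkk⟩ : ∃ k, k₀ = k + 1 := ⟨k₀ - 1, by omega⟩
  have hk1 : P.S (P.digits b k) k ≤ a := by
    have := Nat.find_min hexists (m := k) (by omega)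
    linarith [not_lt.1 this]
  have hk2 : a < P.S (P.digits b (k + 1)) (k + 1) := by
    have := Nat.find_spec hexists
    rwa [← hk₀, hkk] at this
  set c := P.digits b k with hc
  obtain ⟨h, hbc, hn⟩ := P.digits_spec hbmem k
  rw [← hc] at h hbc hn
  set n := P.nextDigit c k b with hnd
  have hgsucc : P.digits b (k + 1) = Function.update c k n := rfl
  obtain ⟨-, hbc1, -⟩ := P.digits_spec hbmem (k + 1)
  rw [hgsucc] at hbc1
  rw [hgsucc, P.S_update h hn] at hk2
  have hRpos : 0 < P.ratio c k := P.ratio_pos h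
  rw [P.cyl_update h hn] at hbc1
  obtain ⟨hb1, hb2⟩ := hbc1
  have h2n : 2 ≤ n := n_two hn
  have hn2 : (2 : ℝ) ≤ (n : ℝ) := by exact_mod_cast h2n
  -- the right piece U₃
  obtain ⟨U₃, hU₃fam, hU₃sub, hU₃diam⟩ := P.prefix_cover (P.adm_update h hn)
    (show b ∈ P.cyl (Function.update c k n) (k + 1) by
      rw [P.cyl_update h hn]; exact ⟨hb1, hb2⟩)
  rw [P.S_update h hn] at hU₃sub hU₃diam
  set y := b - (P.S c k + P.ratio c k / (n : ℝ)) with hy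
  have hypos : 0 < y := by rw [hy]; linarith
  rcases eq_or_lt_of_le hk1 with haS | haS
  · -- `a` is the bottom of the rank-`k` cylinder
    have hU₁mem := P.Ioc_mem_famP_inf h (show P.r c k + 1 ≤ n + 1 by omega)
    have he : ((n + 1 : ℕ) : ℝ) - 1 = (n : ℝ) := by push_cast; ring
    rw [he] at hU₁mem
    refine ⟨_, ∅, U₃, 0, y, Or.inl hU₁mem, Or.inr rfl, Or.inl hU₃fam, ?_, le_rfl,
      hypos.le, by rw [hy]; linarith, ?_, by simp [ediam_alias_eq], hU₃diam⟩
    · intro z hz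
      rcases le_or_gt z (P.S c k + P.ratio c k / (n : ℝ)) with hzn | hzn
      · exact Or.inl (Or.inl ⟨by linarith [hz.1], hzn⟩)
      · exact Or.inr (hU₃sub ⟨hzn, hz.2⟩)
    · rw [ediam_alias_eq, Real.ediam_Ioc]
      apply ENNReal.ofReal_le_ofReal
      rw [← haS]
      linarith
  · -- `a` lies strictly inside the rank-`k` cylinder: it has a digit `m`
    have hamem : a ∈ P.cyl c k := ⟨haS, by have := hbc.2; linarith⟩
    obtain ⟨m, hm, ham⟩ := P.exists_digit h hamem
    rw [P.cyl_update h hm] at ham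
    obtain ⟨ha1, ha2⟩ := ham
    have h2m : 2 ≤ m := n_two hm
    have hm2 : (2 : ℝ) ≤ (m : ℝ) := by exact_mod_cast h2m
    have hmn : n + 1 ≤ m := by
      by_contra hcon
      have hmn' : m ≤ n := by omega
      have : (m : ℝ) ≤ (n : ℝ) := by exact_mod_cast hmn'
      have : P.ratio c k / (n : ℝ) ≤ P.ratio c k / (m : ℝ) :=
        div_le_div_of_nonneg_left hRpos.le (by linarith) this
      linarith
    have hmnR : (n : ℝ) + 1 ≤ (m : ℝ) := by exact_mod_cast hmn
    have htopm_le : P.ratio c k / ((m : ℝ) - 1) ≤ P.ratio c k / (n : ℝ) :=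
      div_le_div_of_nonneg_left hRpos.le (by linarith) (by linarith)
    -- middle piece U₁
    have hmid : ∃ U₁ : Set ℝ, (U₁ ∈ P.famP ∨ U₁ = ∅) ∧
        Ioc (P.S c k + P.ratio c k / ((m : ℝ) - 1)) (P.S c k + P.ratio c k / (n : ℝ)) ⊆ U₁ ∧
        EMetric.diam U₁ ≤ ENNReal.ofReal (b - a) := by
      rcases eq_or_lt_of_le hmn with hmeq | hmlt
      · refine ⟨∅, Or.inr rfl, ?_, by simp [ediam_alias_eq]⟩
        have : (m : ℝ) - 1 = (n : ℝ) := by rw [← hmeq]; push_cast; ring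
        rw [this]
        simp
      · have hU₁mem := P.Ioc_mem_famP_fin h (show P.r c k + 1 ≤ n + 1 by omega)
          (show n + 1 ≤ m - 1 by omega)
        have he1 : ((n + 1 : ℕ) : ℝ) - 1 = (n : ℝ) := by push_cast; ring
        have he2 : ((m - 1 : ℕ) : ℝ) = (m : ℝ) - 1 := by
          have : 1 ≤ m := by omega
          push_cast [this]; ring
        rw [he1, he2] at hU₁mem
        refine ⟨_, Or.inl hU₁mem, le_rfl, ?_⟩
        rw [ediam_alias_eq, Real.ediam_Ioc]
        apply ENNReal.ofReal_le_ofReal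
        linarith
    obtain ⟨U₁, hU₁fam, hU₁sub, hU₁diam⟩ := hmid
    -- left piece U₂
    rcases eq_or_lt_of_le ha2 with haTop | haTop
    · -- `a` is exactly the top of its subcylinder: no left piece needed
      refine ⟨U₁, ∅, U₃, 0, y, hU₁fam, Or.inr rfl, Or.inl hU₃fam, ?_, le_rfl, hypos.le,
        by rw [hy]; linarith, hU₁diam, by simp [ediam_alias_eq], hU₃diam⟩
      intro z hz
      rcases le_or_gt z (P.S c k + P.ratio c k / (n : ℝ)) with hzn | hzn
      · exact Or.inl (Or.inl (hU₁sub ⟨by rw [haTop] at hz; exact hz.1, hzn⟩))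
      · exact Or.inr (hU₃sub ⟨hzn, hz.2⟩)
    · -- genuine left piece via `suffix_cover`
      have htopm := P.top_update h hm
      obtain ⟨U₂, hU₂fam, hU₂sub, hU₂diam⟩ := P.suffix_cover (P.adm_update h hm)
        (le_of_lt (by rw [P.S_update h hm]; exact ha1))
        (by rw [htopm]; exact haTop)
      rw [htopm] at hU₂sub hU₂diam
      set x := P.S c k + P.ratio c k / ((m : ℝ) - 1) - a with hx
      have hxpos : 0 < x := by rw [hx]; linarith
      refine ⟨U₁, U₂, U₃, x, y, hU₁fam, Or.inl hU₂fam, Or.inl hU₃fam, ?_, hxpos.le,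
        hypos.le, by rw [hx, hy]; linarith, hU₁diam, hU₂diam, hU₃diam⟩
      intro z hz
      rcases le_or_gt z (P.S c k + P.ratio c k / ((m : ℝ) - 1)) with hzm | hzm
      · exact Or.inl (Or.inr (hU₂sub ⟨hz.1, hzm⟩))
      · rcases le_or_gt z (P.S c k + P.ratio c k / (n : ℝ)) with hzn | hzn
        · exact Or.inl (Or.inl (hU₁sub ⟨hzm, hzn⟩))
        · exact Or.inr (hU₃sub ⟨hzn, hz.2⟩)
/-- Concavity estimate: `(2x)^α + (2y)^α ≤ 2 (x+y)^α` in `ℝ≥0∞` for `0 < α ≤ 1`. -/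
lemma two_mul_rpow_add {α : ℝ} (hα0 : 0 < α) (hα1 : α ≤ 1) (x y : ℝ≥0∞) :
    (2 * x) ^ α + (2 * y) ^ α ≤ 2 * (x + y) ^ α := by
  have hp : (1 : ℝ) ≤ 1 / α := by
    rw [le_div_iff₀ hα0]; linarith
  have h := ENNReal.rpow_add_le_mul_rpow_add_rpow (x ^ α) (y ^ α) hp
  rw [← ENNReal.rpow_mul x, ← ENNReal.rpow_mul y, mul_one_div, div_self hα0.ne',
    ENNReal.rpow_one, ENNReal.rpow_one] at h
  -- h : (x^α + y^α) ^ (1/α) ≤ 2 ^ (1/α - 1) * (x + y)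
  have h2 := ENNReal.rpow_le_rpow h hα0.le
  rw [← ENNReal.rpow_mul (x ^ α + y ^ α), one_div, inv_mul_cancel₀ hα0.ne',
    ENNReal.rpow_one, ENNReal.mul_rpow_of_nonneg _ _ hα0.le, ← ENNReal.rpow_mul] at h2
  -- h2 : x^α + y^α ≤ 2 ^ ((1/α - 1)*α) * (x+y)^α
  have he : (2 : ℝ≥0∞) ^ ((α⁻¹ - 1) * α) = 2 ^ (1 - α) := by
    congr 1
    field_simp
  rw [he] at h2
  have hmul : (2 : ℝ≥0∞) ^ α * (x ^ α + y ^ α) ≤ 2 ^ α * (2 ^ (1 - α) * (x + y) ^ α) :=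
    mul_le_mul_right h2 _
  calc (2 * x) ^ α + (2 * y) ^ α
      = 2 ^ α * (x ^ α + y ^ α) := by
        rw [ENNReal.mul_rpow_of_nonneg _ _ hα0.le, ENNReal.mul_rpow_of_nonneg _ _ hα0.le,
          mul_add]
  _ ≤ 2 ^ α * (2 ^ (1 - α) * (x + y) ^ α) := hmul
  _ = 2 * (x + y) ^ α := by
      rw [← mul_assoc, ← ENNReal.rpow_add _ _ (by norm_num) (by norm_num)]
      norm_num

/-- Existence of a small positive real with `(ofReal η)^α ≤ γ`. -/
lemma exists_small_rpow {α : ℝ} (hα0 : 0 < α) {γ : ℝ≥0∞} (hγ : 0 < γ) :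
    ∃ η : ℝ, 0 < η ∧ ENNReal.ofReal η ^ α ≤ γ := by
  set w := min γ 1 with hw
  have hw0 : 0 < w := lt_min hγ zero_lt_one
  have hwtop : w ≠ ⊤ := by
    have : w ≤ 1 := min_le_right _ _
    exact ne_top_of_le_ne_top (by norm_num) this
  have hwt0 : 0 < w.toReal := ENNReal.toReal_pos hw0.ne' hwtop
  refine ⟨w.toReal ^ (1 / α), Real.rpow_pos_of_pos hwt0 _, ?_⟩
  rw [← ENNReal.ofReal_rpow_of_nonneg hwt0.le (by positivity : (0:ℝ) ≤ 1/α)] at *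
  rw [← ENNReal.rpow_mul, one_div, inv_mul_cancel₀ hα0.ne', ENNReal.rpow_one,
    ENNReal.ofReal_toReal hwtop]
  exact min_le_left _ _
/-- Three-set cover of `(a,b]` with summed `α`-cost at most `K·(b−a)^α`. -/
lemma cover_cost {α : ℝ} (hα0 : 0 < α) {K : ℝ≥0∞}
    (hKineq : ∀ x y d : ℝ, 0 ≤ x → 0 ≤ y → 0 < d → x + y ≤ d →
      ENNReal.ofReal d ^ α + ENNReal.ofReal (2 * x) ^ α + ENNReal.ofReal (2 * y) ^ α ≤
        K * ENNReal.ofReal d ^ α)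
    {a b : ℝ} (ha : 0 ≤ a) (hab : a < b) (hb : b ≤ 1) :
    ∃ U₁ U₂ U₃ : Set ℝ,
      (U₁ ∈ P.famP ∨ U₁ = ∅) ∧ (U₂ ∈ P.famP ∨ U₂ = ∅) ∧ (U₃ ∈ P.famP ∨ U₃ = ∅) ∧
      Ioc a b ⊆ U₁ ∪ U₂ ∪ U₃ ∧
      EMetric.diam U₁ ≤ ENNReal.ofReal (2 * (b - a)) ∧
      EMetric.diam U₂ ≤ ENNReal.ofReal (2 * (b - a)) ∧
      EMetric.diam U₃ ≤ ENNReal.ofReal (2 * (b - a)) ∧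
      EMetric.diam U₁ ^ α + EMetric.diam U₂ ^ α + EMetric.diam U₃ ^ α ≤
        K * ENNReal.ofReal (b - a) ^ α := by
  obtain ⟨U₁, U₂, U₃, x, y, h1, h2, h3, hcov, hx, hy, hxy, hd1, hd2, hd3⟩ :=
    P.interval_cover ha hab hb
  have hba : 0 < b - a := by linarith
  refine ⟨U₁, U₂, U₃, h1, h2, h3, hcov,
    hd1.trans (ENNReal.ofReal_le_ofReal (by linarith)),
    hd2.trans (ENNReal.ofReal_le_ofReal (by linarith)),
    hd3.trans (ENNReal.ofReal_le_ofReal (by linarith)), ?_⟩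
  calc EMetric.diam U₁ ^ α + EMetric.diam U₂ ^ α + EMetric.diam U₃ ^ α
      ≤ ENNReal.ofReal (b - a) ^ α + ENNReal.ofReal (2 * x) ^ α +
        ENNReal.ofReal (2 * y) ^ α :=
        add_le_add (add_le_add (ENNReal.rpow_le_rpow hd1 hα0.le)
          (ENNReal.rpow_le_rpow hd2 hα0.le)) (ENNReal.rpow_le_rpow hd3 hα0.le)
  _ ≤ K * ENNReal.ofReal (b - a) ^ α := hKineq x y (b - a) hx hy hba hxy

/-- Replace a possibly-empty piece by a genuine member of `famP`. -/
lemma famP_upgrade {α : ℝ} {U T : Set ℝ} (hU : U ∈ P.famP ∨ U = ∅) (hT : T ∈ P.famP)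
    {e γ' : ℝ≥0∞} (hTd : EMetric.diam T ≤ e) (hTγ : EMetric.diam T ^ α ≤ γ')
    (hUd : EMetric.diam U ≤ e) :
    ∃ V, V ∈ P.famP ∧ U ⊆ V ∧ EMetric.diam V ≤ e ∧
      EMetric.diam V ^ α ≤ EMetric.diam U ^ α + γ' := by
  rcases hU with h | h
  · exact ⟨U, h, subset_rfl, hUd, le_self_add⟩
  · subst h
    exact ⟨T, hT, empty_subset _, hTd, hTγ.trans (self_le_add_left _ _)⟩

/-- Cover an arbitrary set `s` of diameter `≤ ε/2` (within `(0,1]`) by five members of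
`famP` of diameter `≤ ε`, at `α`-cost at most `K·(diam s)^α + γ`. -/
lemma piece_construct {α : ℝ} (hα0 : 0 < α) {K : ℝ≥0∞}
    (hKineq : ∀ x y d : ℝ, 0 ≤ x → 0 ≤ y → 0 < d → x + y ≤ d →
      ENNReal.ofReal d ^ α + ENNReal.ofReal (2 * x) ^ α + ENNReal.ofReal (2 * y) ^ α ≤
        K * ENNReal.ofReal d ^ α)
    {ε : ℝ} (hε : 0 < ε) {γ : ℝ≥0∞} (hγ : 0 < γ) (s : Set ℝ)
    (hsd : EMetric.diam s ≤ ENNReal.ofReal (ε / 2)) :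
    ∃ g : Fin 5 → Set ℝ, (∀ i, g i ∈ P.famP) ∧ (s ∩ Ioc 0 1 ⊆ ⋃ i, g i) ∧
      (∀ i, EMetric.diam (g i) ≤ ENNReal.ofReal ε) ∧
      ∑ i, EMetric.diam (g i) ^ α ≤
        K * (⨆ _ : s.Nonempty, EMetric.diam s ^ α) + γ := by
  have h5 : (0 : ℝ≥0∞) < 5 := by norm_num
  set γ5 := γ / 5 with hγ5def
  have hγ5 : 0 < γ5 := ENNReal.div_pos hγ.ne' (by norm_num)
  obtain ⟨η, hη0, hηρ⟩ := exists_small_rpow hα0 hγ5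
  have hη'0 : 0 < min η ε := lt_min hη0 hε
  have tiny : ∀ z ∈ Ioc (0:ℝ) 1, ∃ Tz, Tz ∈ P.famP ∧ z ∈ Tz ∧
      EMetric.diam Tz ≤ ENNReal.ofReal ε ∧ EMetric.diam Tz ^ α ≤ γ5 := by
    intro z hz
    obtain ⟨Tz, h1, h2, h3⟩ := P.small_mem_famP hz hη'0
    refine ⟨Tz, h1, h2, h3.trans (ENNReal.ofReal_le_ofReal (min_le_right _ _)), ?_⟩
    exact (ENNReal.rpow_le_rpow (h3.trans (ENNReal.ofReal_le_ofReal (min_le_left _ _)))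
      hα0.le).trans hηρ
  obtain ⟨T, hTfam, -, hTd, hTγ⟩ := tiny 1 ⟨one_pos, le_rfl⟩
  have hsum5 : ∀ g : Fin 5 → Set ℝ, (∀ i, EMetric.diam (g i) ^ α ≤ γ5) →
      ∑ i, EMetric.diam (g i) ^ α ≤ γ := by
    intro g hg
    calc ∑ i, EMetric.diam (g i) ^ α ≤ ∑ _i : Fin 5, γ5 := Finset.sum_le_sum fun i _ => hg i
    _ = 5 * γ5 := by rw [Finset.sum_const]; simp [mul_comm]
    _ ≤ γ := by rw [hγ5def]; exact ENNReal.mul_div_le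
  rcases Set.eq_empty_or_nonempty (s ∩ Ioc (0:ℝ) 1) with hemp | hne
  · exact ⟨fun _ => T, fun _ => hTfam, by rw [hemp]; exact empty_subset _, fun _ => hTd,
      ((hsum5 (fun _ => T) fun _ => hTγ)).trans (self_le_add_left _ _)⟩
  have hsne : s.Nonempty := ⟨hne.choose, hne.choose_spec.1⟩
  rw [iSup_pos hsne]
  have hbd : Bornology.IsBounded (s ∩ Ioc (0:ℝ) 1) :=
    (Metric.isBounded_Ioc 0 1).subset inter_subset_right
  set l := sInf (s ∩ Ioc (0:ℝ) 1) with hldef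
  set u := sSup (s ∩ Ioc (0:ℝ) 1) with hudef
  have hl0 : 0 ≤ l := le_csInf hne fun z hz => hz.2.1.le
  have hu1 : u ≤ 1 := csSup_le hne fun z hz => hz.2.2
  have hlu : l ≤ u := Real.sInf_le_sSup _ hbd.bddBelow hbd.bddAbove
  have hu0 : 0 < u := by
    obtain ⟨z, hz⟩ := hne
    exact lt_of_lt_of_le hz.2.1 (le_csSup hbd.bddAbove hz)
  have hss : s ∩ Ioc (0:ℝ) 1 ⊆ insert l (Ioc l u) := by
    intro z hz
    have h1 : l ≤ z := csInf_le hbd.bddBelow hz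
    have h2 : z ≤ u := le_csSup hbd.bddAbove hz
    rcases eq_or_lt_of_le h1 with h | h
    · exact Or.inl h.symm
    · exact Or.inr ⟨h, h2⟩
  have hdiam_lu : ENNReal.ofReal (u - l) ≤ EMetric.diam s := by
    have : EMetric.diam (s ∩ Ioc (0:ℝ) 1) = ENNReal.ofReal (u - l) := Real.ediam_eq hbd
    rw [← this]
    exact EMetric.diam_mono inter_subset_left
  rcases eq_or_lt_of_le hlu with hlequ | hlu'
  · -- `s ∩ (0,1]` is the single point `u`
    obtain ⟨Tu, hTu, hTumem, hTud, hTuγ⟩ := tiny u ⟨hu0, hu1⟩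
    refine ⟨fun i => if i = 0 then Tu else T, fun i => by dsimp only; split <;> assumption,
      ?_, fun i => by dsimp only; split <;> assumption, ?_⟩
    · intro z hz
      have := hss hz
      rw [← hlequ] at this
      simp only [Set.Ioc_self, insert_empty_eq, Set.mem_singleton_iff] at this
      refine Set.mem_iUnion.2 ⟨0, ?_⟩
      simp only [if_pos rfl]
      rw [this, hlequ]
      exact hTumem
    · refine le_trans (hsum5 _ fun i => ?_) (self_le_add_left _ _)
      split <;> assumption
  · -- main case: `l < u`
    obtain ⟨U₁, U₂, U₃, hU₁, hU₂, hU₃, hcov, hd1, hd2, hd3, hsum3⟩ :=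
      P.cover_cost hα0 hKineq hl0 hlu' hu1
    have hul2 : 2 * (u - l) ≤ ε := by
      have h1 : ENNReal.ofReal (u - l) ≤ ENNReal.ofReal (ε / 2) := hdiam_lu.trans hsd
      have h2 : u - l ≤ ε / 2 := by
        rw [ENNReal.ofReal_le_ofReal_iff (by linarith)] at h1
        exact h1
      linarith
    have hde : ENNReal.ofReal (2 * (u - l)) ≤ ENNReal.ofReal ε :=
      ENNReal.ofReal_le_ofReal hul2
    obtain ⟨V₁, hV₁fam, hV₁sub, hV₁d, hV₁γ⟩ :=
      P.famP_upgrade (α := α) hU₁ hTfam hTd hTγ (hd1.trans hde)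
    obtain ⟨V₂, hV₂fam, hV₂sub, hV₂d, hV₂γ⟩ :=
      P.famP_upgrade (α := α) hU₂ hTfam hTd hTγ (hd2.trans hde)
    obtain ⟨V₃, hV₃fam, hV₃sub, hV₃d, hV₃γ⟩ :=
      P.famP_upgrade (α := α) hU₃ hTfam hTd hTγ (hd3.trans hde)
    have hT4 : ∃ T4, T4 ∈ P.famP ∧ (0 < l → l ∈ T4) ∧
        EMetric.diam T4 ≤ ENNReal.ofReal ε ∧ EMetric.diam T4 ^ α ≤ γ5 := by
      rcases eq_or_lt_of_le hl0 with h0l | h0l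
      · exact ⟨T, hTfam, fun hc => absurd h0l.symm hc.ne', hTd, hTγ⟩
      · obtain ⟨Tl, h1, h2, h3, h4⟩ := tiny l ⟨h0l, hlu.trans hu1⟩
        exact ⟨Tl, h1, fun _ => h2, h3, h4⟩
    obtain ⟨T4, hT4fam, hT4mem, hT4d, hT4γ⟩ := hT4
    refine ⟨![V₁, V₂, V₃, T4, T], ?_, ?_, ?_, ?_⟩
    · intro i; fin_cases i <;> simpa
    · intro z hz
      rcases hss hz with hzl | hzu
      · have h0l : 0 < l := by
          rw [hzl] at hz
          exact hz.2.1
        refine Set.mem_iUnion.2 ⟨3, ?_⟩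
        have : z ∈ T4 := by rw [hzl]; exact hT4mem h0l
        simpa using this
      · rcases hcov hzu with (hV | hV) | hV
        · exact Set.mem_iUnion.2 ⟨0, by simpa using hV₁sub hV⟩
        · exact Set.mem_iUnion.2 ⟨1, by simpa using hV₂sub hV⟩
        · exact Set.mem_iUnion.2 ⟨2, by simpa using hV₃sub hV⟩
    · intro i; fin_cases i <;> simpa
    · rw [Fin.sum_univ_five]
      simp only [Matrix.cons_val_zero, Matrix.cons_val_one, Matrix.head_cons,
        Matrix.cons_val_two, Matrix.tail_cons, Matrix.cons_val_three, Matrix.cons_val_four]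
      have hγ5γ : γ5 + γ5 + γ5 + γ5 + γ5 ≤ γ := by
        have : (5 : ℝ≥0∞) * γ5 ≤ γ := by rw [hγ5def]; exact ENNReal.mul_div_le
        calc γ5 + γ5 + γ5 + γ5 + γ5 = 5 * γ5 := by ring
        _ ≤ γ := this
      have hKmono : K * ENNReal.ofReal (u - l) ^ α ≤ K * EMetric.diam s ^ α :=
        mul_le_mul_right (ENNReal.rpow_le_rpow hdiam_lu hα0.le) K
      calc EMetric.diam V₁ ^ α + EMetric.diam V₂ ^ α + EMetric.diam V₃ ^ α +
            EMetric.diam T4 ^ α + EMetric.diam T ^ α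
          ≤ (EMetric.diam U₁ ^ α + γ5) + (EMetric.diam U₂ ^ α + γ5) +
            (EMetric.diam U₃ ^ α + γ5) + γ5 + γ5 := by gcongr
      _ = (EMetric.diam U₁ ^ α + EMetric.diam U₂ ^ α + EMetric.diam U₃ ^ α) +
            (γ5 + γ5 + γ5 + γ5 + γ5) := by ring
      _ ≤ K * ENNReal.ofReal (u - l) ^ α + γ := add_le_add hsum3 hγ5γ
      _ ≤ K * EMetric.diam s ^ α + γ := add_le_add_left hKmono γ
open scoped NNReal

/-- The central quantitative estimate: `H^α(E, 𝔓) ≤ K · H^α(E)`. -/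
lemma Hfam_le_mul {α : ℝ} (hα0 : 0 < α) {K : ℝ≥0∞} (hK0 : K ≠ 0) (hKtop : K ≠ ⊤)
    (hKineq : ∀ x y d : ℝ, 0 ≤ x → 0 ≤ y → 0 < d → x + y ≤ d →
      ENNReal.ofReal d ^ α + ENNReal.ofReal (2 * x) ^ α + ENNReal.ofReal (2 * y) ^ α ≤
        K * ENNReal.ofReal d ^ α)
    {E : Set ℝ} (hE : E ⊆ Ioc 0 1) :
    Hfam P.famP α E ≤ K * μH[α] E := by
  rw [Hfam]
  refine iSup₂_le fun ε hε => ?_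
  have hIle : (⨅ (t : ℕ → Set ℝ) (_ : E ⊆ ⋃ n, t n)
      (_ : ∀ n, EMetric.diam (t n) ≤ ENNReal.ofReal (ε / 2)),
      ∑' n, ⨆ _ : (t n).Nonempty, EMetric.diam (t n) ^ α) ≤ μH[α] E := by
    rw [MeasureTheory.Measure.hausdorffMeasure_apply]
    exact le_iSup₂ (f := fun (r : ℝ≥0∞) (_ : 0 < r) =>
      ⨅ (t : ℕ → Set ℝ) (_ : E ⊆ ⋃ n, t n) (_ : ∀ n, EMetric.diam (t n) ≤ r),
        ∑' n, ⨆ _ : (t n).Nonempty, EMetric.diam (t n) ^ α)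
      (ENNReal.ofReal (ε / 2)) (ENNReal.ofReal_pos.2 (by linarith))
  set I := ⨅ (t : ℕ → Set ℝ) (_ : E ⊆ ⋃ n, t n)
      (_ : ∀ n, EMetric.diam (t n) ≤ ENNReal.ofReal (ε / 2)),
      ∑' n, ⨆ _ : (t n).Nonempty, EMetric.diam (t n) ^ α with hIdef
  refine le_trans ?_ (mul_le_mul_right hIle K)
  refine ENNReal.le_of_forall_pos_le_add fun δ hδ hfin => ?_
  have hItop : I ≠ ⊤ := by
    intro h
    rw [h, ENNReal.mul_top hK0] at hfin
    exact (lt_irrefl _ hfin).elim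
  have hδ0 : ((δ : ℝ≥0∞)) ≠ 0 := by exact_mod_cast hδ.ne'
  have hd2pos : (0:ℝ≥0∞) < (δ:ℝ≥0∞) / 2 * K⁻¹ :=
    ENNReal.mul_pos (ENNReal.div_pos hδ0 (by norm_num)).ne' (ENNReal.inv_pos.2 hKtop).ne'
  have hlt : I < I + (δ:ℝ≥0∞) / 2 * K⁻¹ := ENNReal.lt_add_right hItop hd2pos.ne'
  conv_lhs at hlt => rw [hIdef]
  obtain ⟨t, hlt⟩ := iInf_lt_iff.1 hlt
  obtain ⟨hcov, hlt⟩ := iInf_lt_iff.1 hlt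
  obtain ⟨hdiam, hsum⟩ := iInf_lt_iff.1 hlt
  have hpieces : ∀ j : ℕ, ∃ g : Fin 5 → Set ℝ, (∀ i, g i ∈ P.famP) ∧
      (t j ∩ Ioc 0 1 ⊆ ⋃ i, g i) ∧ (∀ i, EMetric.diam (g i) ≤ ENNReal.ofReal ε) ∧
      ∑ i, EMetric.diam (g i) ^ α ≤
        K * (⨆ _ : (t j).Nonempty, EMetric.diam (t j) ^ α) +
          (δ:ℝ≥0∞) / 2 * (2⁻¹ : ℝ≥0∞) ^ (j + 1) := by
    intro j
    refine P.piece_construct hα0 hKineq hε ?_ (t j) (hdiam j)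
    exact ENNReal.mul_pos (ENNReal.div_pos hδ0 (by norm_num)).ne'
      (ENNReal.pow_pos (by norm_num) (j + 1)).ne'
  choose g hgfam hgcov hgdiam hgsum using hpieces
  set e := Nat.divModEquiv 5 with hedef
  set f : ℕ → Set ℝ := fun N => g (e N).1 (e N).2 with hfdef
  have hfcov : E ⊆ ⋃ N, f N := by
    intro z hz
    obtain ⟨j, hj⟩ := Set.mem_iUnion.1 (hcov hz)
    obtain ⟨i, hi⟩ := Set.mem_iUnion.1 (hgcov j ⟨hj, hE hz⟩)
    refine Set.mem_iUnion.2 ⟨e.symm (j, i), ?_⟩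
    rw [hfdef]
    dsimp only
    rw [Equiv.apply_symm_apply]
    exact hi
  have hbody : (⨅ (f' : ℕ → Set ℝ) (_ : E ⊆ ⋃ n, f' n) (_ : ∀ n, f' n ∈ P.famP)
      (_ : ∀ n, EMetric.diam (f' n) ≤ ENNReal.ofReal ε), ∑' n, EMetric.diam (f' n) ^ α)
      ≤ ∑' N, EMetric.diam (f N) ^ α := by
    refine le_trans (iInf_le _ f) ?_
    refine le_trans (iInf_le _ hfcov) ?_
    refine le_trans (iInf_le _ fun N => hgfam _ _) ?_
    exact iInf_le _ fun N => hgdiam _ _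
  refine hbody.trans ?_
  have hgeo : ∑' j : ℕ, ((2⁻¹ : ℝ≥0∞)) ^ (j + 1) = 1 := by
    rw [ENNReal.tsum_geometric_add_one, ENNReal.one_sub_inv_two, inv_inv]
    exact ENNReal.inv_mul_cancel (by norm_num) (by norm_num)
  have hcancel : K * ((δ:ℝ≥0∞) / 2 * K⁻¹) = (δ:ℝ≥0∞) / 2 := by
    rw [mul_comm, mul_assoc, ENNReal.inv_mul_cancel hK0 hKtop, mul_one]
  calc ∑' N, EMetric.diam (f N) ^ α
      = ∑' p : ℕ × Fin 5, EMetric.diam (g p.1 p.2) ^ α :=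
        e.tsum_eq fun p : ℕ × Fin 5 => EMetric.diam (g p.1 p.2) ^ α
  _ = ∑' j : ℕ, ∑' i : Fin 5, EMetric.diam (g j i) ^ α :=
        ENNReal.tsum_prod (f := fun j i => EMetric.diam (g j i) ^ α)
  _ = ∑' j : ℕ, ∑ i : Fin 5, EMetric.diam (g j i) ^ α :=
        tsum_congr fun j => tsum_fintype _
  _ ≤ ∑' j : ℕ, (K * (⨆ _ : (t j).Nonempty, EMetric.diam (t j) ^ α) +
        (δ:ℝ≥0∞) / 2 * (2⁻¹ : ℝ≥0∞) ^ (j + 1)) := ENNReal.tsum_le_tsum fun j => hgsum j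
  _ = K * (∑' j : ℕ, ⨆ _ : (t j).Nonempty, EMetric.diam (t j) ^ α) +
        (δ:ℝ≥0∞) / 2 * ∑' j : ℕ, ((2⁻¹ : ℝ≥0∞)) ^ (j + 1) := by
        rw [ENNReal.tsum_add, ENNReal.tsum_mul_left, ENNReal.tsum_mul_left]
  _ ≤ K * (I + (δ:ℝ≥0∞) / 2 * K⁻¹) + (δ:ℝ≥0∞) / 2 * 1 := by
        refine add_le_add (mul_le_mul_right hsum.le K) ?_
        rw [hgeo]
  _ = K * I + ((δ:ℝ≥0∞) / 2 + (δ:ℝ≥0∞) / 2) := by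
        rw [mul_add, hcancel, mul_one, add_assoc]
  _ = K * I + (δ:ℝ≥0∞) := by rw [ENNReal.add_halves]

/-- The easy comparison: the ordinary Hausdorff measure is bounded by the `Φ`-restricted one. -/
lemma le_Hfam {α : ℝ} (hα0 : 0 < α) (Φ : Set (Set ℝ)) (E : Set ℝ) :
    μH[α] E ≤ Hfam Φ α E := by
  rw [MeasureTheory.Measure.hausdorffMeasure_apply]
  refine iSup₂_le fun r hr => ?_
  rcases eq_or_ne r ⊤ with hrtop | hrtop
  · subst hrtop
    refine le_trans ?_
      (le_iSup₂ (f := fun (ε' : ℝ) (_ : 0 < ε') =>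
        ⨅ (f : ℕ → Set ℝ) (_ : E ⊆ ⋃ n, f n) (_ : ∀ n, f n ∈ Φ)
          (_ : ∀ n, EMetric.diam (f n) ≤ ENNReal.ofReal ε'), ∑' n, EMetric.diam (f n) ^ α)
        (1:ℝ) one_pos)
    refine le_iInf fun f => le_iInf fun hcov => le_iInf fun _hmem => le_iInf fun hdiam => ?_
    refine le_trans (iInf_le _ f) (le_trans (iInf_le _ hcov) (le_trans (iInf_le _ fun n => le_top) ?_))
    exact ENNReal.tsum_le_tsum fun n => iSup_le fun _ => le_rfl
  · have hε0 : 0 < r.toReal := ENNReal.toReal_pos hr.ne' hrtop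
    refine le_trans ?_
      (le_iSup₂ (f := fun (ε' : ℝ) (_ : 0 < ε') =>
        ⨅ (f : ℕ → Set ℝ) (_ : E ⊆ ⋃ n, f n) (_ : ∀ n, f n ∈ Φ)
          (_ : ∀ n, EMetric.diam (f n) ≤ ENNReal.ofReal ε'), ∑' n, EMetric.diam (f n) ^ α)
        r.toReal hε0)
    refine le_iInf fun f => le_iInf fun hcov => le_iInf fun _hmem => le_iInf fun hdiam => ?_
    have hdiam' : ∀ n, EMetric.diam (f n) ≤ r := fun n =>
      (hdiam n).trans (by rw [ENNReal.ofReal_toReal hrtop])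
    refine le_trans (iInf_le _ f) (le_trans (iInf_le _ hcov) (le_trans (iInf_le _ hdiam') ?_))
    exact ENNReal.tsum_le_tsum fun n => iSup_le fun _ => le_rfl

lemma hausdorff_zero_of_one_lt' {α : ℝ} (hα : 1 < α) (E : Set ℝ) : μH[α] E = 0 := by
  have h1' : (1:ℝ≥0) < α.toNNReal := by
    rw [show (1:ℝ≥0) = Real.toNNReal 1 from Real.toNNReal_one.symm]
    exact (Real.toNNReal_lt_toNNReal_iff (by linarith)).2 hα
  have h1 : (1:ℝ≥0∞) < (α.toNNReal : ℝ≥0∞) := by exact_mod_cast h1'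
  have hd : dimH E < (α.toNNReal : ℝ≥0∞) := by
    calc dimH E ≤ dimH (univ : Set ℝ) := dimH_mono (subset_univ E)
    _ = 1 := Real.dimH_univ
    _ < _ := h1
  have h0 := hausdorffMeasure_of_dimH_lt hd
  rwa [Real.coe_toNNReal α (by linarith)] at h0

lemma dimH_le_of_zero' {α : ℝ} (hα0 : 0 < α) {E : Set ℝ} (h : μH[α] E = 0) :
    dimH E ≤ ENNReal.ofReal α := by
  by_contra hcon
  push_neg at hcon
  have h2 : (α.toNNReal : ℝ≥0∞) < dimH E := hcon
  have h3 := hausdorffMeasure_of_lt_dimH h2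
  rw [Real.coe_toNNReal α hα0.le, h] at h3
  exact (by norm_num : (0:ℝ≥0∞) ≠ ⊤) h3

lemma hK3 {α : ℝ} (hα0 : 0 < α) (hα1 : α ≤ 1) :
    ∀ x y d : ℝ, 0 ≤ x → 0 ≤ y → 0 < d → x + y ≤ d →
      ENNReal.ofReal d ^ α + ENNReal.ofReal (2 * x) ^ α + ENNReal.ofReal (2 * y) ^ α ≤
        (3:ℝ≥0∞) * ENNReal.ofReal d ^ α := by
  intro x y d hx hy hd hxy
  have e2 : ∀ z : ℝ, 0 ≤ z → ENNReal.ofReal (2 * z) = 2 * ENNReal.ofReal z := by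
    intro z hz
    rw [ENNReal.ofReal_mul (by norm_num : (0:ℝ) ≤ 2)]
    norm_num
  rw [e2 x hx, e2 y hy]
  have h := two_mul_rpow_add hα0 hα1 (ENNReal.ofReal x) (ENNReal.ofReal y)
  have hsum : ENNReal.ofReal x + ENNReal.ofReal y ≤ ENNReal.ofReal d := by
    rw [← ENNReal.ofReal_add hx hy]
    exact ENNReal.ofReal_le_ofReal hxy
  have h2 : 2 * (ENNReal.ofReal x + ENNReal.ofReal y) ^ α ≤ 2 * ENNReal.ofReal d ^ α :=
    mul_le_mul_right (ENNReal.rpow_le_rpow hsum hα0.le) 2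
  calc ENNReal.ofReal d ^ α + (2 * ENNReal.ofReal x) ^ α + (2 * ENNReal.ofReal y) ^ α
      = ENNReal.ofReal d ^ α + ((2 * ENNReal.ofReal x) ^ α + (2 * ENNReal.ofReal y) ^ α) :=
        add_assoc _ _ _
  _ ≤ ENNReal.ofReal d ^ α + 2 * (ENNReal.ofReal x + ENNReal.ofReal y) ^ α :=
        add_le_add_right h _
  _ ≤ ENNReal.ofReal d ^ α + 2 * ENNReal.ofReal d ^ α := add_le_add_right h2 _
  _ = 3 * ENNReal.ofReal d ^ α := by ring

lemma hKgen {α : ℝ} (hα0 : 0 < α) :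
    ∀ x y d : ℝ, 0 ≤ x → 0 ≤ y → 0 < d → x + y ≤ d →
      ENNReal.ofReal d ^ α + ENNReal.ofReal (2 * x) ^ α + ENNReal.ofReal (2 * y) ^ α ≤
        (3 * (2:ℝ≥0∞) ^ α) * ENNReal.ofReal d ^ α := by
  intro x y d hx hy hd hxy
  have hone : (1:ℝ≥0∞) ≤ (2:ℝ≥0∞) ^ α := by
    rw [show (1:ℝ≥0∞) = (1:ℝ≥0∞) ^ α by rw [ENNReal.one_rpow]]
    exact ENNReal.rpow_le_rpow (by norm_num) hα0.le
  have hbound : ∀ z : ℝ, 0 ≤ z → z ≤ d → ENNReal.ofReal (2 * z) ^ α ≤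
      (2:ℝ≥0∞) ^ α * ENNReal.ofReal d ^ α := by
    intro z hz hzd
    calc ENNReal.ofReal (2 * z) ^ α ≤ ENNReal.ofReal (2 * d) ^ α :=
          ENNReal.rpow_le_rpow (ENNReal.ofReal_le_ofReal (by linarith)) hα0.le
    _ = (2 * ENNReal.ofReal d) ^ α := by
          rw [ENNReal.ofReal_mul (by norm_num : (0:ℝ) ≤ 2)]
          norm_num
    _ = (2:ℝ≥0∞) ^ α * ENNReal.ofReal d ^ α := ENNReal.mul_rpow_of_nonneg _ _ hα0.le
  have h1 : ENNReal.ofReal d ^ α ≤ (2:ℝ≥0∞) ^ α * ENNReal.ofReal d ^ α := by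
    conv_lhs => rw [← one_mul (ENNReal.ofReal d ^ α)]
    exact mul_le_mul_left hone _
  calc ENNReal.ofReal d ^ α + ENNReal.ofReal (2 * x) ^ α + ENNReal.ofReal (2 * y) ^ α
      ≤ (2:ℝ≥0∞) ^ α * ENNReal.ofReal d ^ α + (2:ℝ≥0∞) ^ α * ENNReal.ofReal d ^ α +
        (2:ℝ≥0∞) ^ α * ENNReal.ofReal d ^ α :=
        add_le_add (add_le_add h1 (hbound x hx (by linarith))) (hbound y hy (by linarith))
  _ = (3 * (2:ℝ≥0∞) ^ α) * ENNReal.ofReal d ^ α := by ring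

end PerronSystem

end

/-- For every `E ⊆ (0,1]` and `α > 0`,
`H^α(E) ≤ H^α(E,𝔓) ≤ 3·H^α(E)`; consequently `𝔓` is a faithful family of coverings for the
Hausdorff dimension calculation on `(0,1]`. -/
theorem famP_faithful (P : PerronSystem) :
    (∀ E : Set ℝ, E ⊆ Set.Ioc 0 1 → ∀ α : ℝ, 0 < α →
      μH[α] E ≤ Hfam P.famP α E ∧ Hfam P.famP α E ≤ 3 * μH[α] E) ∧
    (∀ E : Set ℝ, E ⊆ Set.Ioc 0 1 → dimFam P.famP E = dimH E) := by
  have key3 : ∀ E : Set ℝ, E ⊆ Set.Ioc 0 1 → ∀ α : ℝ, 0 < α →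
      Hfam P.famP α E ≤ 3 * μH[α] E := by
    intro E hE α hα0
    rcases le_or_gt α 1 with hα1 | hα1
    · exact P.Hfam_le_mul hα0 (by norm_num) (by norm_num) (PerronSystem.hK3 hα0 hα1) hE
    · have hzero := PerronSystem.hausdorff_zero_of_one_lt' hα1 E
      have hK0 : (3 * (2:ℝ≥0∞) ^ α) ≠ 0 := by
        refine mul_ne_zero (by norm_num) ?_
        exact (ENNReal.rpow_pos (by norm_num) (by norm_num)).ne'
      have hKtop : (3 * (2:ℝ≥0∞) ^ α) ≠ ⊤ := by
        refine ENNReal.mul_ne_top (by norm_num) ?_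
        exact ENNReal.rpow_ne_top_of_nonneg hα0.le (by norm_num)
      have hKle := P.Hfam_le_mul hα0 hK0 hKtop (PerronSystem.hKgen hα0) hE
      rw [hzero, mul_zero] at hKle ⊢
      exact hKle
  constructor
  · intro E hE α hα0
    exact ⟨PerronSystem.le_Hfam hα0 _ E, key3 E hE α hα0⟩
  · intro E hE
    have hdim1 : dimH E ≤ 1 := by
      calc dimH E ≤ dimH (univ : Set ℝ) := dimH_mono (subset_univ E)
      _ = 1 := Real.dimH_univ
    have hdtop : dimH E ≠ ⊤ := ne_top_of_le_ne_top (by norm_num) hdim1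
    apply le_antisymm
    · refine ENNReal.le_of_forall_pos_le_add fun η hη _hfin => ?_
      set α := (dimH E).toReal + (η:ℝ) with hαdef
      have hα0 : 0 < α := add_pos_of_nonneg_of_pos ENNReal.toReal_nonneg
        (by exact_mod_cast hη)
      have hofα : ENNReal.ofReal α = dimH E + (η:ℝ≥0∞) := by
        rw [hαdef, ENNReal.ofReal_add ENNReal.toReal_nonneg (by positivity),
          ENNReal.ofReal_toReal hdtop, ENNReal.ofReal_coe_nnreal]
      have hlt : dimH E < ENNReal.ofReal α := by
        rw [hofα]
        exact ENNReal.lt_add_right hdtop (by exact_mod_cast hη.ne')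
      have hz : μH[α] E = 0 := by
        have h3 := hausdorffMeasure_of_dimH_lt (d := α.toNNReal) hlt
        rwa [Real.coe_toNNReal α hα0.le] at h3
      have hfz : Hfam P.famP α E = 0 := by
        have := key3 E hE α hα0
        rw [hz, mul_zero] at this
        exact le_antisymm this zero_le
      calc dimFam P.famP E ≤ ENNReal.ofReal α := by
            rw [dimFam]
            exact iInf_le_of_le α (iInf_le_of_le hα0 (iInf_le_of_le hfz le_rfl))
      _ = dimH E + (η:ℝ≥0∞) := hofα
    · rw [dimFam]
      refine le_iInf fun α => le_iInf fun hα0 => le_iInf fun hz => ?_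
      have hμz : μH[α] E = 0 :=
        le_antisymm (le_trans (PerronSystem.le_Hfam hα0 _ E) hz.le) zero_le
      exact PerronSystem.dimH_le_of_zero' hα0 hμz
end
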